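/- arXiv:2011.12726 — 6 statements merged into one kernel-verified Lean document; each statement's English description precedes it below -/
import Mathlib

section
/- Let G be the discrete-time LTI system with matrices (A, B, C, D) where A is Schur–Cohn stable (spectral radius strictly less than 1). Suppose there exist γ > 0, a positive semidefinite matrix P ∈ ℝ^{n×n}, and a copositive matrix Q ∈ ℝ^{n_w×n_w} such that L(A, B, C, D, P, Q, γ) is negative definite. Then the positive l2 induced norm satisfies ‖G‖_{2+} < γ; that is, there exists γ̃ < γ such that ‖z‖_2 ≤ γ̃‖w‖_2 for every square-summable input w with w(k) entrywise nonnegative for all k. -/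
open Matrix

noncomputable section

/-- A symmetric matrix is copositive if its quadratic form is nonnegative on the
nonnegative orthant. -/
def Copositive {q : Type*} [Fintype q] (Q : Matrix q q ℝ) : Prop :=
  Q.IsSymm ∧ ∀ x : q → ℝ, (∀ i, 0 ≤ x i) → 0 ≤ x ⬝ᵥ Q.mulVec x

/-- The matrix L(A,B,C,D,P,Q,γ). -/
def Lmat {n w z : Type*} [Fintype n] [Fintype w] [Fintype z]
    [DecidableEq n] [DecidableEq w] [DecidableEq z]
    (A : Matrix n n ℝ) (B : Matrix n w ℝ) (C : Matrix z n ℝ) (D : Matrix z w ℝ)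
    (P : Matrix n n ℝ) (Q : Matrix w w ℝ) (γ : ℝ) : Matrix (n ⊕ w) (n ⊕ w) ℝ :=
  Matrix.fromBlocks (-P) 0 0 ((-(γ ^ 2)) • (1 : Matrix w w ℝ) + Q)
    + (Matrix.fromBlocks A B C D)ᵀ * Matrix.fromBlocks P 0 0 (1 : Matrix z z ℝ)
      * Matrix.fromBlocks A B C D

/-- State of the LTI system x(k+1) = A x(k) + B w(k), x(0) = 0. -/
def ltiState {n w : Type*} [Fintype n] [Fintype w]
    (A : Matrix n n ℝ) (B : Matrix n w ℝ) (ws : ℕ → w → ℝ) : ℕ → n → ℝ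
  | 0 => 0
  | k + 1 => A.mulVec (ltiState A B ws k) + B.mulVec (ws k)

/-- Output z(k) = C x(k) + D w(k). -/
def ltiOutput {n w z : Type*} [Fintype n] [Fintype w] [Fintype z]
    (A : Matrix n n ℝ) (B : Matrix n w ℝ) (C : Matrix z n ℝ) (D : Matrix z w ℝ)
    (ws : ℕ → w → ℝ) (k : ℕ) : z → ℝ :=
  C.mulVec (ltiState A B ws k) + D.mulVec (ws k)

/-- l2 norm of a discrete-time signal. -/
def sigNorm {w : Type*} [Fintype w] (u : ℕ → w → ℝ) : ℝ :=
  Real.sqrt (∑' k, ∑ i, (u k i) ^ 2)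

/-- Euclidean norm of a vector. -/
def vecNorm {ι : Type*} [Fintype ι] (v : ι → ℝ) : ℝ :=
  Real.sqrt (∑ i, (v i) ^ 2)

/-- The positive l2 induced norm of the system (A,B,C,D). -/
def posL2Gain {n w z : Type*} [Fintype n] [Fintype w] [Fintype z]
    (A : Matrix n n ℝ) (B : Matrix n w ℝ) (C : Matrix z n ℝ) (D : Matrix z w ℝ) : ℝ :=
  sSup {c : ℝ | ∃ ws : ℕ → w → ℝ, (∀ k i, 0 ≤ ws k i) ∧
    Summable (fun k => ∑ i, (ws k i) ^ 2) ∧ sigNorm ws = 1 ∧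
    c = sigNorm (ltiOutput A B C D ws)}

/-- The l2 induced norm of the system (A,B,C,D). -/
def l2Gain {n w z : Type*} [Fintype n] [Fintype w] [Fintype z]
    (A : Matrix n n ℝ) (B : Matrix n w ℝ) (C : Matrix z n ℝ) (D : Matrix z w ℝ) : ℝ :=
  sSup {c : ℝ | ∃ ws : ℕ → w → ℝ,
    Summable (fun k => ∑ i, (ws k i) ^ 2) ∧ sigNorm ws = 1 ∧
    c = sigNorm (ltiOutput A B C D ws)}

/-- Schur–Cohn stability: the spectral radius (over ℂ) is < 1. -/
def SchurStable {n : Type*} [Fintype n] [DecidableEq n] (A : Matrix n n ℝ) : Prop :=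
  spectralRadius ℂ (A.map (algebraMap ℝ ℂ)) < 1

/-- Lifted A matrix. -/
def liftA {n : Type*} [Fintype n] [DecidableEq n] (A : Matrix n n ℝ) (N : ℕ) :
    Matrix n n ℝ := A ^ N

/-- Lifted B matrix. -/
def liftB {n w : Type*} [Fintype n] [DecidableEq n]
    (A : Matrix n n ℝ) (B : Matrix n w ℝ) (N : ℕ) : Matrix n (Fin N × w) ℝ :=
  Matrix.of fun r c => (A ^ (N - 1 - (c.1 : ℕ)) * B) r c.2

/-- Lifted C matrix. -/
def liftC {n z : Type*} [Fintype n] [DecidableEq n]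
    (A : Matrix n n ℝ) (C : Matrix z n ℝ) (N : ℕ) : Matrix (Fin N × z) n ℝ :=
  Matrix.of fun r c => (C * A ^ (r.1 : ℕ)) r.2 c

/-- Lifted D matrix. -/
def liftD {n w z : Type*} [Fintype n] [DecidableEq n]
    (A : Matrix n n ℝ) (B : Matrix n w ℝ) (C : Matrix z n ℝ) (D : Matrix z w ℝ)
    (N : ℕ) : Matrix (Fin N × z) (Fin N × w) ℝ :=
  Matrix.of fun r c =>
    if (r.1 : ℕ) = (c.1 : ℕ) then D r.2 c.2
    else if (c.1 : ℕ) < (r.1 : ℕ) then (C * A ^ ((r.1 : ℕ) - (c.1 : ℕ) - 1) * B) r.2 c.2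
    else 0

/-- ReLU. -/
def relu {ι : Type*} (ξ : ι → ℝ) : ι → ℝ := fun i => max (ξ i) 0

/-- Positive maximal singular value. -/
def matPosNorm {ι κ : Type*} [Fintype ι] [Fintype κ] (M : Matrix ι κ ℝ) : ℝ :=
  sSup {c : ℝ | ∃ v : κ → ℝ, (∀ i, 0 ≤ v i) ∧ vecNorm v = 1 ∧ c = vecNorm (M.mulVec v)}

/-- Maximal singular value (spectral norm). -/
def matNorm {ι κ : Type*} [Fintype ι] [Fintype κ] (M : Matrix ι κ ℝ) : ℝ :=
  sSup {c : ℝ | ∃ v : κ → ℝ, vecNorm v = 1 ∧ c = vecNorm (M.mulVec v)}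



/-- auxiliary: quantitative positive definiteness -/

lemma posdef_eps {m : Type*} [Fintype m] [DecidableEq m] {M : Matrix m m ℝ} (hM : M.PosDef) :
    ∃ ε > 0, ∀ x : m → ℝ, ε * ∑ i, x i ^ 2 ≤ x ⬝ᵥ M.mulVec x := by
  cases isEmpty_or_nonempty m with
  | inl h =>
    exact ⟨1, one_pos, fun x => by simp [dotProduct]⟩
  | inr h =>
    set f : EuclideanSpace ℝ m → ℝ := fun x => (x : m → ℝ) ⬝ᵥ M.mulVec x with hf
    have hcont : Continuous f := by
      refine continuous_finset_sum _ fun i _ => ((continuous_apply i).comp (PiLp.continuous_ofLp ..)).mul ?_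
      exact continuous_finset_sum _ fun j _ => continuous_const.mul ((continuous_apply j).comp (PiLp.continuous_ofLp ..))
    have hsph : IsCompact (Metric.sphere (0 : EuclideanSpace ℝ m) 1) := isCompact_sphere 0 1
    have hne : (Metric.sphere (0 : EuclideanSpace ℝ m) 1).Nonempty := by
      refine ⟨EuclideanSpace.single (Classical.arbitrary m) (1 : ℝ), ?_⟩
      simp [EuclideanSpace.norm_single]
    obtain ⟨x₀, hx₀s, hx₀min⟩ := hsph.exists_isMinOn hne hcont.continuousOn
    have hx₀norm : ‖x₀‖ = 1 := by simpa using hx₀s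
    have hx₀ne : (x₀ : m → ℝ) ≠ 0 := by
      intro hc
      have : x₀ = 0 := (WithLp.ofLp_eq_zero 2).mp hc
      rw [this] at hx₀norm; simp at hx₀norm
    have hε : 0 < f x₀ := by simpa using hM.dotProduct_mulVec_pos hx₀ne
    refine ⟨f x₀, hε, fun x => ?_⟩
    rcases eq_or_ne x 0 with rfl | hx
    · simp [dotProduct]
    · set y : EuclideanSpace ℝ m := WithLp.toLp 2 x with hy
      have hyne : y ≠ 0 := fun h => hx (by simpa [y] using congrArg WithLp.ofLp h)
      have hc : (0:ℝ) < ‖y‖ := norm_pos_iff.mpr hyne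
      have hmem : (‖y‖⁻¹ • y) ∈ Metric.sphere (0 : EuclideanSpace ℝ m) 1 := by
        simp [norm_smul, abs_of_pos (inv_pos.mpr hc), inv_mul_cancel₀ hc.ne']
      have hmin := hx₀min hmem
      have hhom : f (‖y‖⁻¹ • y) = ‖y‖⁻¹ * ‖y‖⁻¹ * f y := by
        show ((‖y‖⁻¹ • y : EuclideanSpace ℝ m) : m → ℝ) ⬝ᵥ M.mulVec _ = _
        rw [show ((‖y‖⁻¹ • y : EuclideanSpace ℝ m) : m → ℝ) = ‖y‖⁻¹ • (x : m → ℝ) from rfl]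
        rw [Matrix.mulVec_smul, smul_dotProduct, dotProduct_smul]
        simp [mul_assoc, smul_eq_mul]
        exact Or.inl rfl
      have hnormsq : ‖y‖ ^ 2 = ∑ i, x i ^ 2 := by
        rw [EuclideanSpace.norm_eq]
        rw [Real.sq_sqrt (by positivity)]
        simp [Real.norm_eq_abs, sq_abs, hy]
      have : f x₀ ≤ ‖y‖⁻¹ * ‖y‖⁻¹ * f y := by
        simpa [hhom] using hmin
      have h2 : f x₀ * ‖y‖ ^ 2 ≤ f y := by
        have h3 := mul_le_mul_of_nonneg_right this (le_of_lt (mul_pos hc hc))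
        rw [show ‖y‖⁻¹ * ‖y‖⁻¹ * f y * (‖y‖ * ‖y‖) = f y by field_simp] at h3
        calc f x₀ * ‖y‖ ^ 2 = f x₀ * (‖y‖ * ‖y‖) := by ring
          _ ≤ f y := h3
      calc f x₀ * ∑ i, x i ^ 2 = f x₀ * ‖y‖ ^ 2 := by rw [hnormsq]
        _ ≤ f y := h2
        _ = x ⬝ᵥ M.mulVec x := rfl

lemma quad_id {n w z : Type*} [Fintype n] [Fintype w] [Fintype z]
    [DecidableEq n] [DecidableEq w] [DecidableEq z]
    (A : Matrix n n ℝ) (B : Matrix n w ℝ) (C : Matrix z n ℝ) (D : Matrix z w ℝ)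
    (P : Matrix n n ℝ) (Q : Matrix w w ℝ) (γ : ℝ) (x : n → ℝ) (u : w → ℝ) :
    (Sum.elim x u) ⬝ᵥ (Lmat A B C D P Q γ).mulVec (Sum.elim x u)
      = (A.mulVec x + B.mulVec u) ⬝ᵥ P.mulVec (A.mulVec x + B.mulVec u)
        + (C.mulVec x + D.mulVec u) ⬝ᵥ (C.mulVec x + D.mulVec u)
        - x ⬝ᵥ P.mulVec x - γ ^ 2 * (u ⬝ᵥ u) + u ⬝ᵥ Q.mulVec u := by
  have hM : (fromBlocks A B C D) *ᵥ (Sum.elim x u)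
      = Sum.elim (A *ᵥ x + B *ᵥ u) (C *ᵥ x + D *ᵥ u) := by
    rw [fromBlocks_mulVec]; simp
  have h2 : (Sum.elim x u) ⬝ᵥ ((fromBlocks A B C D)ᵀ * fromBlocks P 0 0 (1 : Matrix z z ℝ)
      * fromBlocks A B C D) *ᵥ (Sum.elim x u)
      = (Sum.elim (A *ᵥ x + B *ᵥ u) (C *ᵥ x + D *ᵥ u)) ⬝ᵥ
        (fromBlocks P 0 0 (1 : Matrix z z ℝ)) *ᵥ (Sum.elim (A *ᵥ x + B *ᵥ u) (C *ᵥ x + D *ᵥ u)) := by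
    rw [Matrix.mul_assoc, ← mulVec_mulVec, ← mulVec_mulVec, dotProduct_mulVec,
      vecMul_transpose, hM]
  rw [Lmat, add_mulVec, dotProduct_add, h2, fromBlocks_mulVec, fromBlocks_mulVec]
  simp only [Sum.elim_comp_inl, Sum.elim_comp_inr, Matrix.zero_mulVec, add_zero, zero_add,
    Matrix.one_mulVec, add_mulVec, Matrix.smul_mulVec, Matrix.neg_mulVec,
    sumElim_dotProduct_sumElim, dotProduct_add, dotProduct_smul, dotProduct_neg,
    smul_eq_mul]
  ring

/-- if the LMI L(A,B,C,D,P,Q,γ) ≺ 0 holds with P positive semidefinite and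
Q copositive, then the positive l2 induced norm of G is < γ. -/
theorem stmt_0 (n nw nz : ℕ)
    (A : Matrix (Fin n) (Fin n) ℝ) (B : Matrix (Fin n) (Fin nw) ℝ)
    (C : Matrix (Fin nz) (Fin n) ℝ) (D : Matrix (Fin nz) (Fin nw) ℝ)
    (γ : ℝ) (P : Matrix (Fin n) (Fin n) ℝ) (Q : Matrix (Fin nw) (Fin nw) ℝ)
    (hA : SchurStable A) (hγ : 0 < γ) (hP : P.PosSemidef) (hQ : Copositive Q)
    (hL : (-(Lmat A B C D P Q γ)).PosDef) :
    ∃ γ' : ℝ, γ' < γ ∧ ∀ ws : ℕ → Fin nw → ℝ, (∀ k i, 0 ≤ ws k i) →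
      Summable (fun k => ∑ i, (ws k i) ^ 2) →
      sigNorm (ltiOutput A B C D ws) ≤ γ' * sigNorm ws := by
  obtain ⟨ε, hε, hεbound⟩ := posdef_eps hL
  set ε' : ℝ := min ε (γ ^ 2 / 2) with hε'def
  have hε'pos : 0 < ε' := lt_min hε (by positivity)
  have hε'le : ε' ≤ ε := min_le_left _ _
  have hγ2 : γ ^ 2 / 2 ≤ γ ^ 2 - ε' := by
    have := min_le_right ε (γ ^ 2 / 2); linarith
  have hsub : 0 < γ ^ 2 - ε' := lt_of_lt_of_le (by positivity) hγ2
  refine ⟨Real.sqrt (γ ^ 2 - ε'), ?_, ?_⟩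
  · calc Real.sqrt (γ ^ 2 - ε') < Real.sqrt (γ ^ 2) :=
        Real.sqrt_lt_sqrt hsub.le (by linarith)
      _ = γ := Real.sqrt_sq hγ.le
  · intro ws hpos hsum
    set xx := ltiState A B ws with hxx
    set zs := ltiOutput A B C D ws with hzs
    have key : ∀ k, (xx (k+1)) ⬝ᵥ P.mulVec (xx (k+1)) + ∑ i, zs k i ^ 2
        ≤ xx k ⬝ᵥ P.mulVec (xx k) + (γ ^ 2 - ε') * ∑ i, ws k i ^ 2 := by
      intro k
      have hq := quad_id A B C D P Q γ (xx k) (ws k)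
      have hb := hεbound (Sum.elim (xx k) (ws k))
      rw [Matrix.neg_mulVec, dotProduct_neg, hq] at hb
      have hx1 : xx (k+1) = A *ᵥ xx k + B *ᵥ ws k := rfl
      have hz : zs k = C *ᵥ xx k + D *ᵥ ws k := rfl
      have hzsum : ∑ i, zs k i ^ 2
          = (C *ᵥ xx k + D *ᵥ ws k) ⬝ᵥ (C *ᵥ xx k + D *ᵥ ws k) := by
        rw [← hz]; simp [dotProduct, pow_two]
      have hwsum : ws k ⬝ᵥ ws k = ∑ i, ws k i ^ 2 := by simp [dotProduct, pow_two]
      have hQpos : 0 ≤ ws k ⬝ᵥ Q *ᵥ ws k := hQ.2 (ws k) (hpos k)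
      have hsplit : ∑ i, (Sum.elim (xx k) (ws k)) i ^ 2
          = ∑ i, xx k i ^ 2 + ∑ i, ws k i ^ 2 := by
        rw [Fintype.sum_sum_type]; simp
      rw [hsplit, hwsum] at hb
      have hxxnn : 0 ≤ ∑ i, xx k i ^ 2 := by positivity
      have hwnn : 0 ≤ ∑ i, ws k i ^ 2 := by positivity
      have hεmul : ε' * ∑ i, ws k i ^ 2
          ≤ ε * (∑ i, xx k i ^ 2 + ∑ i, ws k i ^ 2) := by nlinarith
      rw [hx1, hzsum]
      linarith
    have Vnonneg : ∀ N, 0 ≤ xx N ⬝ᵥ P.mulVec (xx N) := fun N => by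
      simpa using hP.dotProduct_mulVec_nonneg (xx N)
    have tele : ∀ N, xx N ⬝ᵥ P.mulVec (xx N) + ∑ k ∈ Finset.range N, ∑ i, zs k i ^ 2
        ≤ (γ ^ 2 - ε') * ∑ k ∈ Finset.range N, ∑ i, ws k i ^ 2 := by
      intro N
      induction N with
      | zero => simp [hxx, ltiState]
      | succ N ih =>
        rw [Finset.sum_range_succ, Finset.sum_range_succ]
        have := key N
        linarith
    have hwle : ∀ N, ∑ k ∈ Finset.range N, ∑ i, ws k i ^ 2 ≤ ∑' k, ∑ i, ws k i ^ 2 :=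
      fun N => Summable.sum_le_tsum _ (fun k _ => by positivity) hsum
    have hzbound : ∀ N, ∑ k ∈ Finset.range N, ∑ i, zs k i ^ 2
        ≤ (γ ^ 2 - ε') * ∑' k, ∑ i, ws k i ^ 2 := by
      intro N
      have h1 := tele N
      have h2 := mul_le_mul_of_nonneg_left (hwle N) hsub.le
      have h3 := Vnonneg N
      linarith
    have htz : ∑' k, ∑ i, zs k i ^ 2 ≤ (γ ^ 2 - ε') * ∑' k, ∑ i, ws k i ^ 2 :=
      Real.tsum_le_of_sum_range_le (fun k => by positivity) hzbound
    rw [sigNorm, sigNorm, ← Real.sqrt_mul hsub.le]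
    exact Real.sqrt_le_sqrt htz


end
end

section
/- Let G be the discrete-time LTI system with matrices (A, B, C, D), let γ̃ > 0, and let P ∈ ℝ^{n×n} and Q ∈ ℝ^{n_w×n_w} be symmetric matrices such that L(A, B, C, D, P, Q, γ̃) is negative semidefinite. Then for every input w : ℕ → ℝ^{n_w}, the state x and output z of G satisfy, for every N ∈ ℕ: x(N+1)ᵀ P x(N+1) − γ̃² Σ_{k=0}^{N} |w(k)|_2² + Σ_{k=0}^{N} w(k)ᵀ Q w(k) + Σ_{k=0}^{N} |z(k)|_2² ≤ 0. -/
open Matrix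

noncomputable section

lemma quadL {n w z : Type*} [Fintype n] [Fintype w] [Fintype z]
    [DecidableEq n] [DecidableEq w] [DecidableEq z]
    (A : Matrix n n ℝ) (B : Matrix n w ℝ) (C : Matrix z n ℝ) (D : Matrix z w ℝ)
    (P : Matrix n n ℝ) (Q : Matrix w w ℝ) (γ : ℝ) (x : n → ℝ) (y : w → ℝ) :
    Sum.elim x y ⬝ᵥ (Lmat A B C D P Q γ).mulVec (Sum.elim x y)
      = (A.mulVec x + B.mulVec y) ⬝ᵥ P.mulVec (A.mulVec x + B.mulVec y)
        + (C.mulVec x + D.mulVec y) ⬝ᵥ (C.mulVec x + D.mulVec y)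
        - x ⬝ᵥ P.mulVec x - γ ^ 2 * (y ⬝ᵥ y) + y ⬝ᵥ Q.mulVec y := by
  have hM : (Matrix.fromBlocks A B C D).mulVec (Sum.elim x y)
      = Sum.elim (A.mulVec x + B.mulVec y) (C.mulVec x + D.mulVec y) := by
    rw [Matrix.fromBlocks_mulVec]
    simp
  have h2 : Sum.elim x y ⬝ᵥ ((Matrix.fromBlocks A B C D)ᵀ
        * Matrix.fromBlocks P 0 0 (1 : Matrix z z ℝ) * Matrix.fromBlocks A B C D).mulVec (Sum.elim x y)
      = (A.mulVec x + B.mulVec y) ⬝ᵥ P.mulVec (A.mulVec x + B.mulVec y)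
        + (C.mulVec x + D.mulVec y) ⬝ᵥ (C.mulVec x + D.mulVec y) := by
    rw [Matrix.mul_assoc, ← Matrix.mulVec_mulVec, ← Matrix.mulVec_mulVec, hM,
      Matrix.dotProduct_mulVec, Matrix.vecMul_transpose, hM,
      Matrix.fromBlocks_mulVec, sumElim_dotProduct_sumElim]
    simp
  simp only [Lmat, Matrix.add_mulVec, dotProduct_add, h2,
    Matrix.fromBlocks_mulVec, sumElim_dotProduct_sumElim]
  simp [Matrix.add_mulVec, Matrix.neg_mulVec, dotProduct_add, dotProduct_neg,
    Matrix.smul_mulVec, dotProduct_smul, smul_eq_mul]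
  ring

/-- the dissipation inequality obtained by summing the quadratic-form
inequalities induced by L(A,B,C,D,P,Q,γ̃) ⪯ 0. -/
theorem stmt_1 (n nw nz : ℕ)
    (A : Matrix (Fin n) (Fin n) ℝ) (B : Matrix (Fin n) (Fin nw) ℝ)
    (C : Matrix (Fin nz) (Fin n) ℝ) (D : Matrix (Fin nz) (Fin nw) ℝ)
    (γ : ℝ) (P : Matrix (Fin n) (Fin n) ℝ) (Q : Matrix (Fin nw) (Fin nw) ℝ)
    (hγ : 0 < γ) (hP : P.IsSymm) (hQ : Q.IsSymm)
    (hL : (-(Lmat A B C D P Q γ)).PosSemidef) :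
    ∀ (ws : ℕ → Fin nw → ℝ) (N : ℕ),
      ltiState A B ws (N + 1) ⬝ᵥ P.mulVec (ltiState A B ws (N + 1))
        - γ ^ 2 * ∑ k ∈ Finset.range (N + 1), ∑ i, (ws k i) ^ 2
        + ∑ k ∈ Finset.range (N + 1), ws k ⬝ᵥ Q.mulVec (ws k)
        + ∑ k ∈ Finset.range (N + 1), ∑ i, (ltiOutput A B C D ws k i) ^ 2 ≤ 0 := by
  intro ws N
  have step : ∀ k : ℕ,
      ltiState A B ws (k+1) ⬝ᵥ P.mulVec (ltiState A B ws (k+1))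
        - ltiState A B ws k ⬝ᵥ P.mulVec (ltiState A B ws k)
        - γ ^ 2 * ∑ i, (ws k i) ^ 2 + ws k ⬝ᵥ Q.mulVec (ws k)
        + ∑ i, (ltiOutput A B C D ws k i) ^ 2 ≤ 0 := by
    intro k
    set x := ltiState A B ws k with hxdef
    have h := hL.dotProduct_mulVec_nonneg (Sum.elim x (ws k))
    rw [Matrix.neg_mulVec, dotProduct_neg, star_trivial] at h
    have hq := quadL A B C D P Q γ x (ws k)
    have hsq1 : ws k ⬝ᵥ ws k = ∑ i, (ws k i) ^ 2 := by simp [dotProduct, sq]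
    have hsq2 : (C.mulVec x + D.mulVec (ws k)) ⬝ᵥ (C.mulVec x + D.mulVec (ws k))
        = ∑ i, (ltiOutput A B C D ws k i) ^ 2 := by
      simp [ltiOutput, dotProduct, sq, hxdef]
    have hx : ltiState A B ws (k+1) = A.mulVec x + B.mulVec (ws k) := rfl
    rw [hx, ← hsq1, ← hsq2]
    linarith [hq, h]
  induction N with
  | zero =>
    have hz : ltiState A B ws 0 = 0 := rfl
    have h0 : ltiState A B ws 0 ⬝ᵥ P.mulVec (ltiState A B ws 0) = 0 := by
      rw [hz]; simp
    simp only [zero_add, Finset.sum_range_one]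
    linarith [step 0, h0]
  | succ N ih =>
    rw [Finset.sum_range_succ, Finset.sum_range_succ (f := fun k => ws k ⬝ᵥ Q.mulVec (ws k)),
      Finset.sum_range_succ (f := fun k => ∑ i, (ltiOutput A B C D ws k i) ^ 2)]
    have hs := step (N + 1)
    nlinarith [ih, hs]


end
end

section
/- Let A₁ ∈ ℝ^{n×n}, B₁ ∈ ℝ^{n×m₁}, C₁ ∈ ℝ^{l₁×n}, D₁ ∈ ℝ^{l₁×m₁}, A₂ ∈ ℝ^{n×n}, B₂ ∈ ℝ^{n×m₂}, C₂ ∈ ℝ^{l₂×n}, D₂ ∈ ℝ^{l₂×m₂}, and γ > 0. Suppose there exist symmetric matrices P ∈ ℝ^{n×n}, Q₁ ∈ ℝ^{m₁×m₁}, Q₂ ∈ ℝ^{m₂×m₂} such that L(A₁,B₁,C₁,D₁,P,Q₁,γ) ≺ 0 and L(A₂,B₂,C₂,D₂,P,Q₂,γ) ≺ 0. Then L(𝒜, ℬ, 𝒞, 𝒟, P, 𝒬, γ) ≺ 0, where 𝒜 := A₂A₁, ℬ := [A₂B₁, B₂], 𝒞 := [C₁; C₂A₁], 𝒟 := [[D₁,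 0],[C₂B₁, D₂]], and 𝒬 := diag(Q₁, Q₂). -/
open Matrix

noncomputable section

section AuxStmt3

lemma conj_form_aux {a b : Type*} [Fintype a] [Fintype b]
    (M : Matrix a b ℝ) (N : Matrix a a ℝ) (v : b → ℝ) :
    v ⬝ᵥ (Mᵀ * N * M) *ᵥ v = (M *ᵥ v) ⬝ᵥ N *ᵥ (M *ᵥ v) := by
  rw [← Matrix.mulVec_mulVec, ← Matrix.mulVec_mulVec, Matrix.dotProduct_mulVec,
    Matrix.vecMul_transpose]

lemma lmat_form_aux {n w z : Type*} [Fintype n] [Fintype w] [Fintype z]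
    [DecidableEq n] [DecidableEq w] [DecidableEq z]
    (A : Matrix n n ℝ) (B : Matrix n w ℝ) (C : Matrix z n ℝ) (D : Matrix z w ℝ)
    (P : Matrix n n ℝ) (Q : Matrix w w ℝ) (γ : ℝ) (x : n → ℝ) (v : w → ℝ) :
    (Sum.elim x v) ⬝ᵥ (Lmat A B C D P Q γ) *ᵥ (Sum.elim x v) =
      -(x ⬝ᵥ P *ᵥ x) - γ ^ 2 * (v ⬝ᵥ v) + v ⬝ᵥ Q *ᵥ v
      + (A *ᵥ x + B *ᵥ v) ⬝ᵥ P *ᵥ (A *ᵥ x + B *ᵥ v)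
      + (C *ᵥ x + D *ᵥ v) ⬝ᵥ (C *ᵥ x + D *ᵥ v) := by
  simp only [Lmat, Matrix.add_mulVec, dotProduct_add, conj_form_aux]
  simp [Matrix.fromBlocks_mulVec, sumElim_dotProduct_sumElim,
    Matrix.add_mulVec, Matrix.mulVec_add, Matrix.neg_mulVec, Matrix.smul_mulVec,
    dotProduct_add, dotProduct_neg, dotProduct_smul, smul_eq_mul]
  ring

lemma lmat_symm_aux {n w z : Type*} [Fintype n] [Fintype w] [Fintype z]
    [DecidableEq n] [DecidableEq w] [DecidableEq z]
    (A : Matrix n n ℝ) (B : Matrix n w ℝ) (C : Matrix z n ℝ) (D : Matrix z w ℝ)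
    (P : Matrix n n ℝ) (Q : Matrix w w ℝ) (γ : ℝ) (hP : P.IsSymm) (hQ : Q.IsSymm) :
    (Lmat A B C D P Q γ)ᵀ = Lmat A B C D P Q γ := by
  unfold Lmat
  simp [Matrix.transpose_add, Matrix.transpose_mul, Matrix.fromBlocks_transpose,
    Matrix.transpose_neg, Matrix.transpose_smul, hP.eq, hQ.eq, Matrix.mul_assoc]

lemma key_split_aux (n m₁ m₂ l₁ l₂ : ℕ)
    (A₁ : Matrix (Fin n) (Fin n) ℝ) (B₁ : Matrix (Fin n) (Fin m₁) ℝ)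
    (C₁ : Matrix (Fin l₁) (Fin n) ℝ) (D₁ : Matrix (Fin l₁) (Fin m₁) ℝ)
    (A₂ : Matrix (Fin n) (Fin n) ℝ) (B₂ : Matrix (Fin n) (Fin m₂) ℝ)
    (C₂ : Matrix (Fin l₂) (Fin n) ℝ) (D₂ : Matrix (Fin l₂) (Fin m₂) ℝ)
    (γ : ℝ) (P : Matrix (Fin n) (Fin n) ℝ)
    (Q₁ : Matrix (Fin m₁) (Fin m₁) ℝ) (Q₂ : Matrix (Fin m₂) (Fin m₂) ℝ)
    (x : Fin n → ℝ) (w₁ : Fin m₁ → ℝ) (w₂ : Fin m₂ → ℝ) :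
    (Sum.elim x (Sum.elim w₁ w₂)) ⬝ᵥ
      (Lmat (A₂ * A₁) (Matrix.fromCols (A₂ * B₁) B₂)
        (Matrix.fromRows C₁ (C₂ * A₁)) (Matrix.fromBlocks D₁ 0 (C₂ * B₁) D₂)
        P (Matrix.fromBlocks Q₁ 0 0 Q₂) γ) *ᵥ (Sum.elim x (Sum.elim w₁ w₂))
    = (Sum.elim x w₁) ⬝ᵥ (Lmat A₁ B₁ C₁ D₁ P Q₁ γ) *ᵥ (Sum.elim x w₁)
      + (Sum.elim (A₁ *ᵥ x + B₁ *ᵥ w₁) w₂) ⬝ᵥ (Lmat A₂ B₂ C₂ D₂ P Q₂ γ)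
          *ᵥ (Sum.elim (A₁ *ᵥ x + B₁ *ᵥ w₁) w₂) := by
  rw [lmat_form_aux, lmat_form_aux, lmat_form_aux]
  simp only [Matrix.fromCols_mulVec_sumElim, Matrix.fromBlocks_mulVec,
    Matrix.fromRows_mulVec, sumElim_dotProduct_sumElim,
    Matrix.zero_mulVec, add_zero, zero_add, Matrix.mulVec_add, ← Matrix.mulVec_mulVec,
    dotProduct_add, add_dotProduct, Sum.elim_add_add,
    Sum.elim_comp_inl, Sum.elim_comp_inr]
  ring

lemma lmat_neg_aux {n w z : Type*} [Fintype n] [Fintype w] [Fintype z]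
    [DecidableEq n] [DecidableEq w] [DecidableEq z]
    {A : Matrix n n ℝ} {B : Matrix n w ℝ} {C : Matrix z n ℝ} {D : Matrix z w ℝ}
    {P : Matrix n n ℝ} {Q : Matrix w w ℝ} {γ : ℝ}
    (h : (-(Lmat A B C D P Q γ)).PosDef) (u : n ⊕ w → ℝ) :
    u ⬝ᵥ (Lmat A B C D P Q γ) *ᵥ u ≤ 0 := by
  by_cases hu : u = 0
  · simp [hu]
  · have := h.dotProduct_mulVec_pos hu
    simp only [star_trivial, Matrix.neg_mulVec, dotProduct_neg] at this
    linarith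

lemma lmat_neg_aux' {n w z : Type*} [Fintype n] [Fintype w] [Fintype z]
    [DecidableEq n] [DecidableEq w] [DecidableEq z]
    {A : Matrix n n ℝ} {B : Matrix n w ℝ} {C : Matrix z n ℝ} {D : Matrix z w ℝ}
    {P : Matrix n n ℝ} {Q : Matrix w w ℝ} {γ : ℝ}
    (h : (-(Lmat A B C D P Q γ)).PosDef) (u : n ⊕ w → ℝ) (hu : u ≠ 0) :
    u ⬝ᵥ (Lmat A B C D P Q γ) *ᵥ u < 0 := by
  have := h.dotProduct_mulVec_pos hu
  simp only [star_trivial, Matrix.neg_mulVec, dotProduct_neg] at this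
  linarith

end AuxStmt3

/-- if L(A₁,B₁,C₁,D₁,P,Q₁,γ) ≺ 0 and L(A₂,B₂,C₂,D₂,P,Q₂,γ) ≺ 0, then
the composed system satisfies L(𝒜,ℬ,𝒞,𝒟,P,diag(Q₁,Q₂),γ) ≺ 0. -/
theorem stmt_3 (n m₁ m₂ l₁ l₂ : ℕ)
    (A₁ : Matrix (Fin n) (Fin n) ℝ) (B₁ : Matrix (Fin n) (Fin m₁) ℝ)
    (C₁ : Matrix (Fin l₁) (Fin n) ℝ) (D₁ : Matrix (Fin l₁) (Fin m₁) ℝ)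
    (A₂ : Matrix (Fin n) (Fin n) ℝ) (B₂ : Matrix (Fin n) (Fin m₂) ℝ)
    (C₂ : Matrix (Fin l₂) (Fin n) ℝ) (D₂ : Matrix (Fin l₂) (Fin m₂) ℝ)
    (γ : ℝ) (P : Matrix (Fin n) (Fin n) ℝ)
    (Q₁ : Matrix (Fin m₁) (Fin m₁) ℝ) (Q₂ : Matrix (Fin m₂) (Fin m₂) ℝ)
    (hγ : 0 < γ) (hP : P.IsSymm) (hQ₁ : Q₁.IsSymm) (hQ₂ : Q₂.IsSymm)
    (h₁ : (-(Lmat A₁ B₁ C₁ D₁ P Q₁ γ)).PosDef)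
    (h₂ : (-(Lmat A₂ B₂ C₂ D₂ P Q₂ γ)).PosDef) :
    (-(Lmat (A₂ * A₁) (Matrix.fromCols (A₂ * B₁) B₂)
        (Matrix.fromRows C₁ (C₂ * A₁)) (Matrix.fromBlocks D₁ 0 (C₂ * B₁) D₂)
        P (Matrix.fromBlocks Q₁ 0 0 Q₂) γ)).PosDef := by
  refine Matrix.PosDef.of_dotProduct_mulVec_pos ?_ ?_
  · show (-(Lmat _ _ _ _ _ _ _))ᵀ = _
    have hQ : (Matrix.fromBlocks Q₁ 0 0 Q₂).IsSymm := by
      show _ᵀ = _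
      rw [Matrix.fromBlocks_transpose, hQ₁.eq, hQ₂.eq, Matrix.transpose_zero,
        Matrix.transpose_zero]
    rw [Matrix.transpose_neg, lmat_symm_aux _ _ _ _ _ _ _ hP hQ]
  · intro v hv
    set x : Fin n → ℝ := v ∘ Sum.inl with hx
    set w₁ : Fin m₁ → ℝ := v ∘ Sum.inr ∘ Sum.inl with hw₁
    set w₂ : Fin m₂ → ℝ := v ∘ Sum.inr ∘ Sum.inr with hw₂
    have hv' : v = Sum.elim x (Sum.elim w₁ w₂) := by
      funext i
      cases i with
      | inl i => rfl
      | inr j => cases j <;> rfl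
    simp only [star_trivial, Matrix.neg_mulVec, dotProduct_neg]
    rw [hv', key_split_aux]
    have h₂le := lmat_neg_aux h₂ (Sum.elim (A₁ *ᵥ x + B₁ *ᵥ w₁) w₂)
    by_cases h1 : Sum.elim x w₁ = (0 : Fin n ⊕ Fin m₁ → ℝ)
    · have hx0 : x = 0 := by funext i; exact congrFun h1 (Sum.inl i)
      have hw10 : w₁ = 0 := by funext i; exact congrFun h1 (Sum.inr i)
      have hw20 : w₂ ≠ 0 := by
        intro h0
        apply hv
        rw [hv', hx0, hw10, h0]
        funext i; cases i with
        | inl i => rfl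
        | inr j => cases j <;> rfl
      have hu2 : Sum.elim (A₁ *ᵥ x + B₁ *ᵥ w₁) w₂ ≠ 0 := by
        intro h0
        apply hw20
        funext i; exact congrFun h0 (Sum.inr i)
      have h2lt := lmat_neg_aux' h₂ _ hu2
      rw [h1]
      simp only [zero_dotProduct]
      linarith
    · have h1lt := lmat_neg_aux' h₁ _ h1
      linarith

end
end

section
/- Let (Â_N, B̂_N, Ĉ_N, D̂_N) be the N-th order lifted matrices of (A, B, C, D), let γ > 0, let P ∈ ℝ^{n×n} be positive semidefinite, and let Q ∈ ℝ^{Nn_w×Nn_w} be copositive with L(Â_N, B̂_N, Ĉ_N, D̂_N, P, Q, γ) ≺ 0. Then for every p ∈ ℕ, the block-diagonal matrix Q_p := diag(Q, …, Q) (p copies) is copositive and L(Â_{pN}, B̂_{pN}, Ĉ_{pN}, D̂_{pN}, P, Q_p, γ) ≺ 0. -/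
open Matrix

noncomputable section

/-- Identification of `p` copies of a stacked index block with one stacked index block:
`((k, j), i) ↦ (i * N + k, j)`, i.e. the `i`-th copy occupies the `i`-th group of `N`
consecutive block-rows/columns. -/
def blockCopyEquiv (p N : ℕ) (w : Type*) : ((Fin N × w) × Fin p) ≃ (Fin (p * N) × w) :=
  ((Equiv.prodComm (Fin N × w) (Fin p)).trans
      (Equiv.prodAssoc (Fin p) (Fin N) w).symm).trans
    (Equiv.prodCongr finProdFinEquiv (Equiv.refl w))


namespace Stmt4Aux

open Finset

/-- The quadratic form of `Lmat`. -/
def qf {n w z : Type*} [Fintype n] [Fintype w] [Fintype z]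
    (A : Matrix n n ℝ) (B : Matrix n w ℝ) (C : Matrix z n ℝ) (D : Matrix z w ℝ)
    (P : Matrix n n ℝ) (Q : Matrix w w ℝ) (γ : ℝ) (x : n → ℝ) (u : w → ℝ) : ℝ :=
  (A *ᵥ x + B *ᵥ u) ⬝ᵥ P *ᵥ (A *ᵥ x + B *ᵥ u) - x ⬝ᵥ P *ᵥ x
    + (C *ᵥ x + D *ᵥ u) ⬝ᵥ (C *ᵥ x + D *ᵥ u) - γ^2 * (u ⬝ᵥ u) + u ⬝ᵥ Q *ᵥ u

lemma dot_Lmat {n w z : Type*} [Fintype n] [Fintype w] [Fintype z]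
    [DecidableEq n] [DecidableEq w] [DecidableEq z]
    (A : Matrix n n ℝ) (B : Matrix n w ℝ) (C : Matrix z n ℝ) (D : Matrix z w ℝ)
    (P : Matrix n n ℝ) (Q : Matrix w w ℝ) (γ : ℝ) (x : n → ℝ) (u : w → ℝ) :
    Sum.elim x u ⬝ᵥ (Lmat A B C D P Q γ) *ᵥ Sum.elim x u = qf A B C D P Q γ x u := by
  have h1 : (Matrix.fromBlocks A B C D) *ᵥ Sum.elim x u
      = Sum.elim (A *ᵥ x + B *ᵥ u) (C *ᵥ x + D *ᵥ u) := by
    simp [fromBlocks_mulVec]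
  rw [Lmat, add_mulVec, dotProduct_add, Matrix.mul_assoc, ← mulVec_mulVec]
  conv_lhs => rw [dotProduct_mulVec _ (fromBlocks A B C D)ᵀ, vecMul_transpose, h1,
    ← mulVec_mulVec, h1, fromBlocks_mulVec]
  simp [qf, add_mulVec, smul_mulVec, one_mulVec, dotProduct_add, dotProduct_smul, dotProduct_neg,
    neg_mulVec, fromBlocks_mulVec, sumElim_dotProduct_sumElim, add_dotProduct]
  ring

lemma mulVec_sum' {m k : Type*} [Fintype k] {ι : Type*} (s : Finset ι)
    (M : Matrix m k ℝ) (f : ι → k → ℝ) :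
    M *ᵥ (∑ i ∈ s, f i) = ∑ i ∈ s, M *ᵥ f i := by
  simp only [← Matrix.mulVecLin_apply]
  exact map_sum _ _ _

lemma dot_comp_equiv {α β : Type*} [Fintype α] [Fintype β] (e : α ≃ β)
    (x y : β → ℝ) : x ⬝ᵥ y = (x ∘ e) ⬝ᵥ (y ∘ e) :=
  (Equiv.sum_comp e (fun b => x b * y b)).symm

lemma reindex_quad {α β : Type*} [Fintype α] [Fintype β]
    (e : α ≃ β) (M : Matrix α α ℝ) (x : β → ℝ) :
    x ⬝ᵥ (Matrix.reindex e e M) *ᵥ x = (x ∘ e) ⬝ᵥ M *ᵥ (x ∘ e) := by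
  rw [reindex_apply, submatrix_mulVec_equiv, dot_comp_equiv e]
  congr 1
  ext a
  simp

lemma blockDiag_quad {α ι : Type*} [Fintype α] [Fintype ι] [DecidableEq ι]
    (d : ι → Matrix α α ℝ) (y : α × ι → ℝ) :
    y ⬝ᵥ (Matrix.blockDiagonal d) *ᵥ y
      = ∑ i : ι, (fun a => y (a, i)) ⬝ᵥ (d i) *ᵥ (fun a => y (a, i)) := by
  rw [dotProduct]
  rw [Fintype.sum_prod_type]
  rw [Finset.sum_comm]
  refine Finset.sum_congr rfl fun i _ => ?_
  rw [dotProduct]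
  refine Finset.sum_congr rfl fun a _ => ?_
  congr 1
  rw [mulVec, mulVec, dotProduct, dotProduct, Fintype.sum_prod_type, Finset.sum_comm]
  rw [Finset.sum_eq_single i]
  · refine Finset.sum_congr rfl fun b _ => ?_
    rw [blockDiagonal_apply, if_pos rfl]
  · intro i' _ hi'
    refine Finset.sum_eq_zero fun b _ => ?_
    rw [blockDiagonal_apply, if_neg (by simpa using hi'.symm), zero_mul]
  · simp

lemma isHermitian_of_isSymm {m : Type*} [Fintype m] {M : Matrix m m ℝ} (h : M.IsSymm) :
    M.IsHermitian := by
  ext i j; rw [conjTranspose_apply, star_trivial, h.apply]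

lemma isSymm_of_isHermitian {m : Type*} [Fintype m] {M : Matrix m m ℝ} (h : M.IsHermitian) :
    M.IsSymm := by
  ext i j; rw [transpose_apply, ← h.apply i j, star_trivial]

lemma Lmat_isSymm {n w z : Type*} [Fintype n] [Fintype w] [Fintype z]
    [DecidableEq n] [DecidableEq w] [DecidableEq z]
    (A : Matrix n n ℝ) (B : Matrix n w ℝ) (C : Matrix z n ℝ) (D : Matrix z w ℝ)
    {P : Matrix n n ℝ} {Q : Matrix w w ℝ} (γ : ℝ) (hP : P.IsSymm) (hQ : Q.IsSymm) :
    (Lmat A B C D P Q γ).IsSymm := by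
  unfold Matrix.IsSymm Lmat
  have hP' : Pᵀ = P := hP
  have hQ' : Qᵀ = Q := hQ
  simp only [transpose_add, transpose_mul, transpose_transpose, fromBlocks_transpose,
    transpose_neg, transpose_smul, transpose_one, transpose_zero, hP', hQ']
  rw [Matrix.mul_assoc]

lemma blockCopyEquiv_fst_val (p N : ℕ) (w : Type*) (k : Fin N) (i : Fin p) (j : w) :
    ((blockCopyEquiv p N w ((k, j), i)).1 : ℕ) = (i : ℕ) * N + (k : ℕ) := by
  simp [blockCopyEquiv, finProdFinEquiv]
  ring

section Dyn

variable {n w z : Type*} [Fintype n] [Fintype w] [Fintype z] [DecidableEq n]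
  (A : Matrix n n ℝ) (B : Matrix n w ℝ) (C : Matrix z n ℝ) (D : Matrix z w ℝ)

lemma ltiState_closed (u : ℕ → w → ℝ) (M : ℕ) :
    ltiState A B u M = ∑ k ∈ Finset.range M, (A ^ (M - 1 - k) * B) *ᵥ u k := by
  induction M with
  | zero => simp [ltiState]
  | succ M ih =>
      rw [Finset.sum_range_succ]
      have h1 : ∀ k ∈ Finset.range M, (A ^ (M + 1 - 1 - k) * B) *ᵥ u k
          = A *ᵥ ((A ^ (M - 1 - k) * B) *ᵥ u k) := by
        intro k hk
        have hk' := Finset.mem_range.mp hk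
        have he : M + 1 - 1 - k = (M - 1 - k) + 1 := by omega
        rw [mulVec_mulVec, ← Matrix.mul_assoc, ← pow_succ', he]
      rw [Finset.sum_congr rfl h1]
      show A *ᵥ (ltiState A B u M) + B *ᵥ u M = _
      rw [ih, mulVec_sum']
      congr 1
      simp

/-- state at time t starting from x -/
def stFrom (x : n → ℝ) (u : ℕ → w → ℝ) (t : ℕ) : n → ℝ :=
  (A ^ t) *ᵥ x + ltiState A B u t

lemma stFrom_succ (x : n → ℝ) (u : ℕ → w → ℝ) (t : ℕ) :
    stFrom A B x u (t + 1) = A *ᵥ stFrom A B x u t + B *ᵥ u t := by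
  show _ = A *ᵥ ((A ^ t) *ᵥ x + ltiState A B u t) + B *ᵥ u t
  rw [mulVec_add, mulVec_mulVec, ← pow_succ']
  show (A ^ (t+1)) *ᵥ x + (A *ᵥ ltiState A B u t + B *ᵥ u t) = _
  rw [add_assoc]

lemma stFrom_zero (x : n → ℝ) (u : ℕ → w → ℝ) : stFrom A B x u 0 = x := by
  simp [stFrom, ltiState]

lemma stFrom_shift (x : n → ℝ) (u : ℕ → w → ℝ) (s : ℕ) : ∀ t,
    stFrom A B x u (s + t) = stFrom A B (stFrom A B x u s) (fun k => u (s + k)) t := by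
  intro t
  induction t with
  | zero => simp [stFrom, ltiState]
  | succ t ih => rw [← add_assoc, stFrom_succ, ih, stFrom_succ]

lemma lift_state (M : ℕ) (x : n → ℝ) (u : ℕ → w → ℝ) (v : Fin M × w → ℝ)
    (hv : ∀ c, v c = u c.1 c.2) :
    (liftA A M) *ᵥ x + (liftB A B M) *ᵥ v = stFrom A B x u M := by
  unfold stFrom liftA
  congr 1
  rw [ltiState_closed]
  ext r
  rw [mulVec, Finset.sum_apply]
  show ∑ c : Fin M × w, (A ^ (M - 1 - (c.1:ℕ)) * B) r c.2 * v c = _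
  rw [Fintype.sum_prod_type]
  have : ∀ k : Fin M, ∑ j : w, (A ^ (M - 1 - (k:ℕ)) * B) r j * v (k, j)
      = ((A ^ (M - 1 - (k:ℕ)) * B) *ᵥ u (k:ℕ)) r := by
    intro k
    rw [mulVec]
    exact Finset.sum_congr rfl fun j _ => by rw [hv]
  rw [Finset.sum_congr rfl fun k _ => this k]
  exact Fin.sum_univ_eq_sum_range (fun t => ((A ^ (M - 1 - t) * B) *ᵥ u t) r) M

set_option linter.unusedSectionVars false in
lemma lift_output (M : ℕ) (x : n → ℝ) (u : ℕ → w → ℝ) (v : Fin M × w → ℝ)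
    (hv : ∀ c, v c = u c.1 c.2) (r : Fin M) (j2 : z) :
    ((liftC A C M) *ᵥ x + (liftD A B C D M) *ᵥ v) (r, j2)
      = (C *ᵥ stFrom A B x u (r : ℕ) + D *ᵥ u (r : ℕ)) j2 := by
  have hC : ((liftC A C M) *ᵥ x) (r, j2) = (C *ᵥ ((A ^ (r:ℕ)) *ᵥ x)) j2 := by
    rw [mulVec_mulVec]; rfl
  have hD : ((liftD A B C D M) *ᵥ v) (r, j2)
      = (∑ t ∈ Finset.range (r:ℕ), ((C * A ^ ((r:ℕ) - t - 1) * B) *ᵥ u t) j2)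
        + (D *ᵥ u (r:ℕ)) j2 := by
    rw [mulVec]
    show ∑ c : Fin M × w, (liftD A B C D M) (r, j2) c * v c = _
    rw [Fintype.sum_prod_type]
    have key : ∀ k : Fin M, ∑ j : w, (liftD A B C D M) (r, j2) (k, j) * v (k, j)
        = (fun t => if (r:ℕ) = t then (D *ᵥ u t) j2
            else if t < (r:ℕ) then ((C * A ^ ((r:ℕ) - t - 1) * B) *ᵥ u t) j2 else 0) (k:ℕ) := by
      intro k
      dsimp only
      by_cases h1 : (r:ℕ) = (k:ℕ)
      · rw [if_pos h1, mulVec]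
        refine Finset.sum_congr rfl fun j _ => ?_
        rw [hv]
        simp only [liftD, Matrix.of_apply]
        rw [if_pos h1]
      · rw [if_neg h1]
        by_cases h2 : (k:ℕ) < (r:ℕ)
        · rw [if_pos h2, mulVec]
          refine Finset.sum_congr rfl fun j _ => ?_
          rw [hv]
          simp only [liftD, Matrix.of_apply]
          rw [if_neg h1, if_pos h2]
        · rw [if_neg h2]
          refine Finset.sum_eq_zero fun j _ => ?_
          simp only [liftD, Matrix.of_apply]
          rw [if_neg h1, if_neg h2, zero_mul]
    rw [Finset.sum_congr rfl fun k _ => key k,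
      Fin.sum_univ_eq_sum_range (fun t => if (r:ℕ) = t then (D *ᵥ u t) j2
        else if t < (r:ℕ) then ((C * A ^ ((r:ℕ) - t - 1) * B) *ᵥ u t) j2 else 0) M]
    rw [← Finset.sum_range_add_sum_Ico _ (Nat.succ_le_of_lt r.2)]
    have h3 : ∑ t ∈ Finset.Ico ((r:ℕ)+1) M, (if (r:ℕ) = t then (D *ᵥ u t) j2
        else if t < (r:ℕ) then ((C * A ^ ((r:ℕ) - t - 1) * B) *ᵥ u t) j2 else 0) = 0 := by
      refine Finset.sum_eq_zero fun t ht => ?_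
      have := (Finset.mem_Ico.mp ht).1
      rw [if_neg (by omega), if_neg (by omega)]
    rw [h3, add_zero, Finset.sum_range_succ, if_pos rfl]
    congr 1
    refine Finset.sum_congr rfl fun t ht => ?_
    have := Finset.mem_range.mp ht
    rw [if_neg (by omega), if_pos this]
  rw [Pi.add_apply, hC, hD]
  have h5 : (C *ᵥ ltiState A B u (r:ℕ)) j2
      = ∑ t ∈ Finset.range (r:ℕ), ((C * A ^ ((r:ℕ) - t - 1) * B) *ᵥ u t) j2 := by
    rw [ltiState_closed, mulVec_sum', Finset.sum_apply]
    refine Finset.sum_congr rfl fun t ht => ?_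
    have ht' := Finset.mem_range.mp ht
    have he : (r:ℕ) - 1 - t = (r:ℕ) - t - 1 := by omega
    rw [mulVec_mulVec, ← Matrix.mul_assoc, he]
  have h6 : (C *ᵥ stFrom A B x u (r:ℕ) + D *ᵥ u (r:ℕ)) j2
      = (C *ᵥ (A ^ (r:ℕ)) *ᵥ x) j2 + (C *ᵥ ltiState A B u (r:ℕ)) j2 + (D *ᵥ u (r:ℕ)) j2 := by
    rw [stFrom, mulVec_add, mulVec_mulVec]
    simp [Pi.add_apply]
  rw [h6, h5]
  ring

end Dyn

lemma qf_lift_split {n w z : Type*} [Fintype n] [DecidableEq n] [Fintype w] [Fintype z]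
    (A : Matrix n n ℝ) (B : Matrix n w ℝ) (C : Matrix z n ℝ) (D : Matrix z w ℝ)
    (P : Matrix n n ℝ) (γ : ℝ) (N p : ℕ)
    (Q : Matrix (Fin N × w) (Fin N × w) ℝ)
    (x : n → ℝ) (wh : Fin (p * N) × w → ℝ) (u : ℕ → w → ℝ)
    (hu : ∀ c : Fin (p * N) × w, wh c = u (c.1 : ℕ) c.2) :
    qf (liftA A (p*N)) (liftB A B (p*N)) (liftC A C (p*N)) (liftD A B C D (p*N)) P
        (Matrix.reindex (blockCopyEquiv p N w) (blockCopyEquiv p N w)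
          (Matrix.blockDiagonal fun _ : Fin p => Q)) γ x wh
      = ∑ i ∈ Finset.range p,
          qf (liftA A N) (liftB A B N) (liftC A C N) (liftD A B C D N) P Q γ
            (stFrom A B x u (i * N)) (fun c : Fin N × w => u (i * N + (c.1 : ℕ)) c.2) := by
  set X : ℕ → n → ℝ := fun i => stFrom A B x u (i * N) with hX
  set wB : ℕ → Fin N × w → ℝ := fun i c => u (i * N + (c.1 : ℕ)) c.2 with hwB
  have hwhe : ∀ (i : Fin p) (c : Fin N × w),
      wh (blockCopyEquiv p N w (c, i)) = wB (i : ℕ) c := by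
    intro i c
    rw [hu]
    exact congrFun (congrArg u (blockCopyEquiv_fst_val p N w c.1 i c.2)) _
  have stepA : ∀ i : ℕ, (liftA A N) *ᵥ X i + (liftB A B N) *ᵥ wB i = X (i + 1) := by
    intro i
    rw [lift_state A B N (X i) (fun t => u (i * N + t)) (wB i) (fun c => rfl)]
    show stFrom A B (stFrom A B x u (i * N)) _ N = stFrom A B x u ((i + 1) * N)
    rw [← stFrom_shift]
    congr 1
    ring
  have stepB : (liftA A (p * N)) *ᵥ x + (liftB A B (p * N)) *ᵥ wh = X p :=
    lift_state A B (p * N) x u wh hu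
  have hX0 : X 0 = x := by
    show stFrom A B x u (0 * N) = x
    rw [Nat.zero_mul, stFrom_zero]
  have hout : ∀ (i : Fin p) (k : Fin N) (j2 : z),
      ((liftC A C (p*N)) *ᵥ x + (liftD A B C D (p*N)) *ᵥ wh)
          (blockCopyEquiv p N z ((k, j2), i))
        = ((liftC A C N) *ᵥ X (i : ℕ) + (liftD A B C D N) *ᵥ wB (i : ℕ)) (k, j2) := by
    intro i k j2
    have h2 : blockCopyEquiv p N z ((k, j2), i) = (finProdFinEquiv (i, k), j2) := rfl
    rw [h2, lift_output A B C D (p*N) x u wh hu (finProdFinEquiv (i, k)) j2,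
      lift_output A B C D N (X (i:ℕ)) (fun t => u ((i:ℕ) * N + t)) (wB (i:ℕ))
        (fun c => rfl) k j2]
    have h3 : ((finProdFinEquiv (i, k) : Fin (p * N)) : ℕ) = (i : ℕ) * N + (k : ℕ) :=
      blockCopyEquiv_fst_val p N z k i j2
    rw [h3, stFrom_shift]
  have hT3 : (liftC A C (p*N) *ᵥ x + liftD A B C D (p*N) *ᵥ wh)
        ⬝ᵥ (liftC A C (p*N) *ᵥ x + liftD A B C D (p*N) *ᵥ wh)
      = ∑ i ∈ Finset.range p,
          (liftC A C N *ᵥ X i + liftD A B C D N *ᵥ wB i)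
            ⬝ᵥ (liftC A C N *ᵥ X i + liftD A B C D N *ᵥ wB i) := by
    rw [dotProduct,
      ← Equiv.sum_comp (blockCopyEquiv p N z)
        (fun c => (liftC A C (p*N) *ᵥ x + liftD A B C D (p*N) *ᵥ wh) c
          * (liftC A C (p*N) *ᵥ x + liftD A B C D (p*N) *ᵥ wh) c),
      Fintype.sum_prod_type, Finset.sum_comm, ← Fin.sum_univ_eq_sum_range]
    refine Finset.sum_congr rfl fun i _ => ?_
    rw [dotProduct]
    refine Finset.sum_congr rfl fun cz _ => ?_
    rw [hout i cz.1 cz.2]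
  have hT4 : wh ⬝ᵥ wh = ∑ i ∈ Finset.range p, wB i ⬝ᵥ wB i := by
    rw [dotProduct, ← Equiv.sum_comp (blockCopyEquiv p N w) (fun c => wh c * wh c),
      Fintype.sum_prod_type, Finset.sum_comm, ← Fin.sum_univ_eq_sum_range]
    refine Finset.sum_congr rfl fun i _ => ?_
    rw [dotProduct]
    refine Finset.sum_congr rfl fun c _ => ?_
    rw [hwhe i c]
  have hT5 : wh ⬝ᵥ (Matrix.reindex (blockCopyEquiv p N w) (blockCopyEquiv p N w)
          (Matrix.blockDiagonal fun _ : Fin p => Q)) *ᵥ wh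
      = ∑ i ∈ Finset.range p, wB i ⬝ᵥ Q *ᵥ wB i := by
    rw [reindex_quad, blockDiag_quad, ← Fin.sum_univ_eq_sum_range]
    refine Finset.sum_congr rfl fun i _ => ?_
    have : (fun a => (wh ∘ (blockCopyEquiv p N w)) (a, i)) = wB (i : ℕ) := by
      funext c
      exact hwhe i c
    rw [this]
  have hqf : ∀ i ∈ Finset.range p,
      qf (liftA A N) (liftB A B N) (liftC A C N) (liftD A B C D N) P Q γ (X i) (wB i)
        = (X (i+1) ⬝ᵥ P *ᵥ X (i+1)) - (X i ⬝ᵥ P *ᵥ X i)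
          + ((liftC A C N *ᵥ X i + liftD A B C D N *ᵥ wB i)
              ⬝ᵥ (liftC A C N *ᵥ X i + liftD A B C D N *ᵥ wB i))
          - γ^2 * (wB i ⬝ᵥ wB i) + wB i ⬝ᵥ Q *ᵥ wB i := by
    intro i _
    rw [qf, stepA i]
  rw [Finset.sum_congr rfl hqf, qf, stepB, hT3, hT4, hT5,
    Finset.sum_add_distrib, Finset.sum_sub_distrib, Finset.sum_add_distrib,
    Finset.sum_range_sub (fun i => X i ⬝ᵥ P *ᵥ X i), hX0, ← Finset.mul_sum]

end Stmt4Aux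

/-- if the LMI holds for the N-lifted system with copositive Q, it holds for
the pN-lifted system with the block-diagonal matrix diag(Q,…,Q) (p copies), which is
again copositive. -/
theorem stmt_4 (n nw nz : ℕ)
    (A : Matrix (Fin n) (Fin n) ℝ) (B : Matrix (Fin n) (Fin nw) ℝ)
    (C : Matrix (Fin nz) (Fin n) ℝ) (D : Matrix (Fin nz) (Fin nw) ℝ)
    (N : ℕ) (hN : 0 < N) (γ : ℝ) (hγ : 0 < γ)
    (P : Matrix (Fin n) (Fin n) ℝ) (hP : P.PosSemidef)
    (Q : Matrix (Fin N × Fin nw) (Fin N × Fin nw) ℝ) (hQ : Copositive Q)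
    (hL : (-(Lmat (liftA A N) (liftB A B N) (liftC A C N) (liftD A B C D N)
        P Q γ)).PosDef) :
    ∀ p : ℕ, 0 < p →
      Copositive (Matrix.reindex (blockCopyEquiv p N (Fin nw)) (blockCopyEquiv p N (Fin nw))
          (Matrix.blockDiagonal fun _ : Fin p => Q)) ∧
      (-(Lmat (liftA A (p * N)) (liftB A B (p * N)) (liftC A C (p * N))
          (liftD A B C D (p * N)) P
          (Matrix.reindex (blockCopyEquiv p N (Fin nw)) (blockCopyEquiv p N (Fin nw))
            (Matrix.blockDiagonal fun _ : Fin p => Q)) γ)).PosDef := by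
  intro p hp
  classical
  have hPsymm : P.IsSymm := Stmt4Aux.isSymm_of_isHermitian hP.1
  have hQpSymm : (Matrix.reindex (blockCopyEquiv p N (Fin nw)) (blockCopyEquiv p N (Fin nw))
      (Matrix.blockDiagonal fun _ : Fin p => Q)).IsSymm := by
    unfold Matrix.IsSymm
    rw [transpose_reindex, blockDiagonal_transpose]
    exact congrArg _ (congrArg _ (funext fun _ => hQ.1))
  have hQpCop : Copositive (Matrix.reindex (blockCopyEquiv p N (Fin nw))
      (blockCopyEquiv p N (Fin nw)) (Matrix.blockDiagonal fun _ : Fin p => Q)) := by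
    refine ⟨hQpSymm, fun v hv => ?_⟩
    rw [Stmt4Aux.reindex_quad, Stmt4Aux.blockDiag_quad]
    exact Finset.sum_nonneg fun i _ => hQ.2 _ (fun c => hv _)
  refine ⟨hQpCop, ?_⟩
  -- strict negativity of the small quadratic form
  have hstrict : ∀ (y : Fin n → ℝ) (u' : Fin N × Fin nw → ℝ), Sum.elim y u' ≠ 0 →
      Stmt4Aux.qf (liftA A N) (liftB A B N) (liftC A C N) (liftD A B C D N) P Q γ y u' < 0 := by
    intro y u' hne
    have h0 : 0 < Sum.elim y u' ⬝ᵥ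
        (-(Lmat (liftA A N) (liftB A B N) (liftC A C N) (liftD A B C D N) P Q γ))
          *ᵥ Sum.elim y u' := by
      simpa using hL.dotProduct_mulVec_pos hne
    rw [neg_mulVec, dotProduct_neg, Stmt4Aux.dot_Lmat] at h0
    linarith
  have hle : ∀ (y : Fin n → ℝ) (u' : Fin N × Fin nw → ℝ),
      Stmt4Aux.qf (liftA A N) (liftB A B N) (liftC A C N) (liftD A B C D N) P Q γ y u' ≤ 0 := by
    intro y u'
    by_cases hne : Sum.elim y u' = 0
    · have hy : y = 0 := funext fun i => congrFun hne (Sum.inl i)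
      have hu' : u' = 0 := funext fun i => congrFun hne (Sum.inr i)
      rw [hy, hu']
      simp [Stmt4Aux.qf]
    · exact le_of_lt (hstrict y u' hne)
  -- Hermitian part
  have hLpSymm : (Lmat (liftA A (p*N)) (liftB A B (p*N)) (liftC A C (p*N))
      (liftD A B C D (p*N)) P
      (Matrix.reindex (blockCopyEquiv p N (Fin nw)) (blockCopyEquiv p N (Fin nw))
        (Matrix.blockDiagonal fun _ : Fin p => Q)) γ).IsSymm :=
    Stmt4Aux.Lmat_isSymm _ _ _ _ γ hPsymm hQpSymm
  -- positivity
  have hpos : ∀ v : (Fin n ⊕ Fin (p*N) × Fin nw) → ℝ, v ≠ 0 →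
      0 < v ⬝ᵥ (-(Lmat (liftA A (p*N)) (liftB A B (p*N)) (liftC A C (p*N))
        (liftD A B C D (p*N)) P
        (Matrix.reindex (blockCopyEquiv p N (Fin nw)) (blockCopyEquiv p N (Fin nw))
          (Matrix.blockDiagonal fun _ : Fin p => Q)) γ)) *ᵥ v := by
    intro v hv
    set x : Fin n → ℝ := v ∘ Sum.inl with hxdef
    set wh : Fin (p*N) × Fin nw → ℝ := v ∘ Sum.inr with hwhdef
    have hv' : v = Sum.elim x wh := by funext c; cases c <;> rfl
    set u : ℕ → Fin nw → ℝ :=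
      fun t j => if h : t < p * N then wh (⟨t, h⟩, j) else 0 with hudef
    have hu : ∀ c : Fin (p*N) × Fin nw, wh c = u (c.1 : ℕ) c.2 := by
      intro c
      have h1 : u (c.1 : ℕ) c.2 = wh (⟨(c.1 : ℕ), c.1.2⟩, c.2) := by
        rw [hudef]
        exact dif_pos c.1.2
      rw [h1]
    have hwhe : ∀ (i : Fin p) (c : Fin N × Fin nw),
        wh (blockCopyEquiv p N (Fin nw) (c, i)) = u ((i:ℕ) * N + (c.1 : ℕ)) c.2 := by
      intro i c
      rw [hu]
      exact congrFun (congrArg u (Stmt4Aux.blockCopyEquiv_fst_val p N (Fin nw) c.1 i c.2)) _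
    have hsplit := Stmt4Aux.qf_lift_split A B C D P γ N p Q x wh u hu
    have hex : ∃ i ∈ Finset.range p,
        Sum.elim (Stmt4Aux.stFrom A B x u (i * N))
          (fun c : Fin N × Fin nw => u (i * N + (c.1 : ℕ)) c.2) ≠ 0 := by
      by_cases hx0 : x = 0
      · have hwh0 : wh ≠ 0 := by
          intro h
          apply hv
          rw [hv', hx0, h]
          funext c
          cases c <;> rfl
        obtain ⟨c, hc⟩ := Function.ne_iff.mp hwh0
        obtain ⟨d, hd⟩ : ∃ d, blockCopyEquiv p N (Fin nw) d = c :=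
          ⟨_, (blockCopyEquiv p N (Fin nw)).apply_symm_apply c⟩
        refine ⟨(d.2 : ℕ), Finset.mem_range.mpr d.2.2, ?_⟩
        intro h
        apply hc
        have h2 := congrFun h (Sum.inr d.1)
        simp only [Sum.elim_inr, Pi.zero_apply] at h2
        rw [← hd]
        exact (hwhe d.2 d.1).trans h2
      · refine ⟨0, Finset.mem_range.mpr hp, ?_⟩
        intro h
        apply hx0
        funext i
        have h2 := congrFun h (Sum.inl i)
        simpa [Nat.zero_mul, Stmt4Aux.stFrom_zero] using h2
    obtain ⟨i0, hi0mem, hi0⟩ := hex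
    have key : 0 < ∑ i ∈ Finset.range p,
        -(Stmt4Aux.qf (liftA A N) (liftB A B N) (liftC A C N) (liftD A B C D N) P Q γ
          (Stmt4Aux.stFrom A B x u (i * N))
          (fun c : Fin N × Fin nw => u (i * N + (c.1 : ℕ)) c.2)) := by
      refine Finset.sum_pos' (fun i _ => neg_nonneg.mpr (hle _ _)) ⟨i0, hi0mem, ?_⟩
      exact neg_pos.mpr (hstrict _ _ hi0)
    rw [hv', neg_mulVec, dotProduct_neg, Stmt4Aux.dot_Lmat, hsplit]
    rw [← Finset.sum_neg_distrib] at *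
    linarith [key]
  refine Matrix.PosDef.of_dotProduct_mulVec_pos (Stmt4Aux.isHermitian_of_isSymm ?_)
    fun v hv => by simpa using hpos v hv
  unfold Matrix.IsSymm
  rw [transpose_neg, hLpSymm]


end
end

section
/- For N ∈ ℕ define γ̄_{N+} := inf{ γ > 0 : ∃ P ∈ ℝ^{n×n} positive semidefinite and Q ∈ ℝ^{Nn_w×Nn_w} copositive with L(Â_N, B̂_N, Ĉ_N, D̂_N, P, Q, γ) ≺ 0 }, and define γ̄̄_{N+} in the same way but with Q required to be a sum of a positive semidefinite matrix and a symmetric entrywise nonnegative matrix. Then for all N₁, N₂, p ∈ ℕ with N₂ = pN₁, one has γ̄_{N₂+} ≤ γ̄_{N₁+} and γ̄̄_{N₂+} ≤ γ̄̄_{N₁+}. -/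
open Matrix

noncomputable section

/-- γ̄_{N+}: infimum of γ > 0 for which the lifted LMI is feasible with a copositive Q. -/
def gammaBarPlus {n nw nz : ℕ}
    (A : Matrix (Fin n) (Fin n) ℝ) (B : Matrix (Fin n) (Fin nw) ℝ)
    (C : Matrix (Fin nz) (Fin n) ℝ) (D : Matrix (Fin nz) (Fin nw) ℝ) (N : ℕ) : ℝ :=
  sInf {γ : ℝ | 0 < γ ∧ ∃ (P : Matrix (Fin n) (Fin n) ℝ)
    (Q : Matrix (Fin N × Fin nw) (Fin N × Fin nw) ℝ),
    P.PosSemidef ∧ Copositive Q ∧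
    (-(Lmat (liftA A N) (liftB A B N) (liftC A C N) (liftD A B C D N) P Q γ)).PosDef}

/-- γ̄̄_{N+}: infimum of γ > 0 for which the lifted LMI is feasible with
Q a sum of a positive semidefinite matrix and a symmetric entrywise nonnegative matrix. -/
def gammaBarBarPlus {n nw nz : ℕ}
    (A : Matrix (Fin n) (Fin n) ℝ) (B : Matrix (Fin n) (Fin nw) ℝ)
    (C : Matrix (Fin nz) (Fin n) ℝ) (D : Matrix (Fin nz) (Fin nw) ℝ) (N : ℕ) : ℝ :=
  sInf {γ : ℝ | 0 < γ ∧ ∃ (P : Matrix (Fin n) (Fin n) ℝ)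
    (Q Q₁ Q₂ : Matrix (Fin N × Fin nw) (Fin N × Fin nw) ℝ),
    P.PosSemidef ∧ Q = Q₁ + Q₂ ∧ Q₁.PosSemidef ∧ Q₂.IsSymm ∧ (∀ i j, 0 ≤ Q₂ i j) ∧
    (-(Lmat (liftA A N) (liftB A B N) (liftC A C N) (liftD A B C D N) P Q γ)).PosDef}

namespace Stmt5Aux
set_option linter.unusedSectionVars false


variable {n w z : Type*} [Fintype n] [Fintype w] [Fintype z]
  [DecidableEq n] [DecidableEq w] [DecidableEq z]

/-- trajectory with initial condition -/
def traj (A : Matrix n n ℝ) (B : Matrix n w ℝ) (x0 : n → ℝ) (ws : ℕ → w → ℝ) : ℕ → n → ℝ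
  | 0 => x0
  | k + 1 => A *ᵥ (traj A B x0 ws k) + B *ᵥ (ws k)

variable (A : Matrix n n ℝ) (B : Matrix n w ℝ) (C : Matrix z n ℝ) (D : Matrix z w ℝ)

lemma traj_add (x0 : n → ℝ) (ws : ℕ → w → ℝ) (m k : ℕ) :
    traj A B x0 ws (m + k) = traj A B (traj A B x0 ws m) (fun t => ws (m + t)) k := by
  induction k with
  | zero => rfl
  | succ k ih => rw [← Nat.add_assoc]; simp [traj, ih]

lemma traj_closed (x0 : n → ℝ) (ws : ℕ → w → ℝ) (k : ℕ) :
    traj A B x0 ws k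
      = (A ^ k) *ᵥ x0 + ∑ t ∈ Finset.range k, (A ^ (k - 1 - t)) *ᵥ (B *ᵥ ws t) := by
  induction k with
  | zero => simp [traj]
  | succ k ih =>
      rw [show traj A B x0 ws (k+1) = A *ᵥ (traj A B x0 ws k) + B *ᵥ (ws k) from rfl, ih]
      have hsum : A *ᵥ (∑ t ∈ Finset.range k, A ^ (k - 1 - t) *ᵥ (B *ᵥ ws t))
          = ∑ t ∈ Finset.range k, A ^ (k + 1 - 1 - t) *ᵥ (B *ᵥ ws t) := by
        have := map_sum (Matrix.mulVecLin A)
          (fun t => A ^ (k - 1 - t) *ᵥ (B *ᵥ ws t)) (Finset.range k)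
        simp only [Matrix.mulVecLin_apply] at this
        rw [this]
        refine Finset.sum_congr rfl fun t ht => ?_
        have htk := Finset.mem_range.mp ht
        rw [Matrix.mulVec_mulVec, ← pow_succ', show k - 1 - t + 1 = k + 1 - 1 - t by omega]
      rw [Finset.sum_range_succ, Matrix.mulVec_add, hsum, Matrix.mulVec_mulVec, ← pow_succ']
      simp only [Nat.add_sub_cancel, Nat.sub_self, pow_zero, Matrix.one_mulVec]
      abel

/-- quadratic form of the L matrix -/
def qf (A : Matrix n n ℝ) (B : Matrix n w ℝ) (C : Matrix z n ℝ) (D : Matrix z w ℝ)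
    (P : Matrix n n ℝ) (Q : Matrix w w ℝ) (γ : ℝ) (x : n → ℝ) (v : w → ℝ) : ℝ :=
  Sum.elim x v ⬝ᵥ (Lmat A B C D P Q γ) *ᵥ Sum.elim x v

lemma qf_eq (P : Matrix n n ℝ) (Q : Matrix w w ℝ) (γ : ℝ) (x : n → ℝ) (v : w → ℝ) :
    qf A B C D P Q γ x v =
      -(x ⬝ᵥ P *ᵥ x) + (-(γ ^ 2) * (v ⬝ᵥ v) + v ⬝ᵥ Q *ᵥ v)
        + ((A *ᵥ x + B *ᵥ v) ⬝ᵥ P *ᵥ (A *ᵥ x + B *ᵥ v)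
          + (C *ᵥ x + D *ᵥ v) ⬝ᵥ (C *ᵥ x + D *ᵥ v)) := by
  have h1 : (Matrix.fromBlocks A B C D) *ᵥ Sum.elim x v = Sum.elim (A *ᵥ x + B *ᵥ v) (C *ᵥ x + D *ᵥ v) := by
    rw [fromBlocks_mulVec]; simp
  unfold qf Lmat
  rw [Matrix.add_mulVec, dotProduct_add]
  congr 1
  · rw [fromBlocks_mulVec]
    simp only [Sum.elim_comp_inl, Sum.elim_comp_inr, sumElim_dotProduct_sumElim]
    simp [Matrix.add_mulVec, dotProduct_add, Matrix.neg_mulVec, smul_mulVec,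
      dotProduct_smul, smul_eq_mul]
  · rw [← Matrix.mulVec_mulVec, ← Matrix.mulVec_mulVec]
    rw [Matrix.dotProduct_mulVec, Matrix.vecMul_transpose, h1]
    rw [fromBlocks_mulVec]
    simp only [Sum.elim_comp_inl, Sum.elim_comp_inr, zero_mulVec, add_zero, zero_add,
      one_mulVec, sumElim_dotProduct_sumElim]


lemma liftB_mulVec (N : ℕ) (v : Fin N × w → ℝ) :
    (liftB A B N) *ᵥ v = ∑ k : Fin N, (A ^ (N - 1 - (k : ℕ))) *ᵥ (B *ᵥ fun c => v (k, c)) := by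
  ext r
  simp only [Matrix.mulVec, dotProduct, liftB, Matrix.of_apply, Fintype.sum_prod_type,
    Finset.sum_apply, Matrix.mul_apply, Finset.sum_mul, Finset.mul_sum]
  refine Finset.sum_congr rfl fun k _ => ?_
  rw [Finset.sum_comm]
  exact Finset.sum_congr rfl fun q _ => Finset.sum_congr rfl fun c _ => mul_assoc _ _ _

lemma lift_state (N : ℕ) (x0 : n → ℝ) (ws : ℕ → w → ℝ) :
    (liftA A N) *ᵥ x0 + (liftB A B N) *ᵥ (fun kc => ws kc.1 kc.2) = traj A B x0 ws N := by
  rw [traj_closed, liftB_mulVec, liftA]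
  congr 1
  rw [← Fin.sum_univ_eq_sum_range (fun t => (A ^ (N - 1 - t)) *ᵥ (B *ᵥ ws t)) N]

lemma lift_output (N : ℕ) (x0 : n → ℝ) (ws : ℕ → w → ℝ) (k : Fin N) (zz : z) :
    ((liftC A C N) *ᵥ x0 + (liftD A B C D N) *ᵥ (fun kc => ws kc.1 kc.2)) (k, zz)
      = (C *ᵥ traj A B x0 ws k + D *ᵥ ws k) zz := by
  have hC : ((liftC A C N) *ᵥ x0) (k, zz) = ((C * A ^ (k : ℕ)) *ᵥ x0) zz := by
    simp [liftC, Matrix.mulVec, dotProduct]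
  have hD : ((liftD A B C D N) *ᵥ (fun kc => ws kc.1 kc.2)) (k, zz)
      = (∑ t ∈ Finset.range (k : ℕ), ((C * A ^ ((k : ℕ) - 1 - t) * B) *ᵥ ws t) zz)
        + (D *ᵥ ws k) zz := by
    simp only [Matrix.mulVec, dotProduct, liftD, Matrix.of_apply, Fintype.sum_prod_type]
    rw [Fin.sum_univ_eq_sum_range (fun t => ∑ c,
      (if (k : ℕ) = t then D zz c
        else if t < (k : ℕ) then (C * A ^ ((k : ℕ) - t - 1) * B) zz c else 0) * ws t c) N]
    have h1 : (k : ℕ) + 1 ≤ N := k.2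
    rw [Finset.range_eq_Ico, ← Finset.sum_Ico_consecutive _ (Nat.zero_le ((k : ℕ) + 1)) h1]
    have h2 : ∑ t ∈ Finset.Ico ((k : ℕ) + 1) N, (∑ c,
        (if (k : ℕ) = t then D zz c
          else if t < (k : ℕ) then (C * A ^ ((k : ℕ) - t - 1) * B) zz c else 0) * ws t c) = 0 := by
      refine Finset.sum_eq_zero fun t ht => ?_
      have hkt := (Finset.mem_Ico.mp ht).1
      refine Finset.sum_eq_zero fun c _ => ?_
      rw [if_neg (by omega), if_neg (by omega), zero_mul]
    rw [h2, add_zero, ← Finset.range_eq_Ico, Finset.sum_range_succ]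
    congr 1
    · refine Finset.sum_congr rfl fun t ht => ?_
      have htk := Finset.mem_range.mp ht
      refine Finset.sum_congr rfl fun c _ => ?_
      rw [if_neg (by omega), if_pos (by omega),
        show (k : ℕ) - t - 1 = (k : ℕ) - 1 - t by omega]
    · exact Finset.sum_congr rfl fun c _ => by simp
  rw [Pi.add_apply, hC, hD, Pi.add_apply, traj_closed, Matrix.mulVec_add]
  have h3 : C *ᵥ (∑ t ∈ Finset.range (k : ℕ), A ^ ((k : ℕ) - 1 - t) *ᵥ (B *ᵥ ws t))
      = ∑ t ∈ Finset.range (k : ℕ), (C * A ^ ((k : ℕ) - 1 - t) * B) *ᵥ ws t := by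
    have h4 := map_sum (Matrix.mulVecLin C)
      (fun t => A ^ ((k : ℕ) - 1 - t) *ᵥ (B *ᵥ ws t)) (Finset.range (k : ℕ))
    simp only [Matrix.mulVecLin_apply] at h4
    rw [h4]
    exact Finset.sum_congr rfl fun t _ => by rw [Matrix.mulVec_mulVec, Matrix.mulVec_mulVec]
  rw [h3, Matrix.mulVec_mulVec]
  simp only [Pi.add_apply, Finset.sum_apply]
  ring

lemma traj_lift (N : ℕ) (x0 : n → ℝ) (ws : ℕ → w → ℝ) (j : ℕ) :
    traj (liftA A N) (liftB A B N) x0 (fun j ic => ws (j * N + (ic.1 : ℕ)) ic.2) j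
      = traj A B x0 ws (j * N) := by
  induction j with
  | zero => rw [Nat.zero_mul]; rfl
  | succ j ih =>
      rw [show traj (liftA A N) (liftB A B N) x0 _ (j + 1)
          = (liftA A N) *ᵥ (traj (liftA A N) (liftB A B N) x0
              (fun j ic => ws (j * N + (ic.1 : ℕ)) ic.2) j)
            + (liftB A B N) *ᵥ (fun ic => ws (j * N + (ic.1 : ℕ)) ic.2) from rfl, ih]
      rw [lift_state A B N (traj A B x0 ws (j * N)) (fun t => ws (j * N + t))]
      rw [← traj_add, show j * N + N = (j + 1) * N by ring]

/-- Block-diagonal expansion of `Q`. -/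
def Qhat {w : Type*} (p N : ℕ) (Q : Matrix (Fin N × w) (Fin N × w) ℝ) :
    Matrix (Fin (p * N) × w) (Fin (p * N) × w) ℝ :=
  Matrix.of fun r c =>
    if r.1.divNat = c.1.divNat then Q (r.1.modNat, r.2) (c.1.modNat, c.2) else 0

/-- the j-th slice of a vector over `Fin (p*N) × w`. -/
def slice {w : Type*} (p N : ℕ) (v : Fin (p * N) × w → ℝ) (j : Fin p) : Fin N × w → ℝ :=
  fun ic => v (finProdFinEquiv (j, ic.1), ic.2)

lemma divNat_emb {p N : ℕ} (j : Fin p) (i : Fin N) :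
    (finProdFinEquiv (j, i)).divNat = j :=
  congrArg Prod.fst (finProdFinEquiv.symm_apply_apply (j, i))

lemma modNat_emb {p N : ℕ} (j : Fin p) (i : Fin N) :
    (finProdFinEquiv (j, i)).modNat = i :=
  congrArg Prod.snd (finProdFinEquiv.symm_apply_apply (j, i))

lemma sum_reindex {α : Type*} [AddCommMonoid α] {w : Type*} [Fintype w] (p N : ℕ)
    (f : Fin (p * N) × w → α) :
    ∑ ka : Fin (p * N) × w, f ka
      = ∑ j : Fin p, ∑ ia : Fin N × w, f (finProdFinEquiv (j, ia.1), ia.2) := by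
  rw [← Equiv.sum_comp ((Equiv.prodAssoc (Fin p) (Fin N) w).symm.trans
      (finProdFinEquiv.prodCongr (Equiv.refl w))) f, Fintype.sum_prod_type]
  rfl

lemma Qhat_dot {w : Type*} [Fintype w] (p N : ℕ) (Q : Matrix (Fin N × w) (Fin N × w) ℝ)
    (u v : Fin (p * N) × w → ℝ) :
    u ⬝ᵥ (Qhat p N Q) *ᵥ v
      = ∑ j : Fin p, (slice p N u j) ⬝ᵥ Q *ᵥ (slice p N v j) := by
  simp only [dotProduct, Matrix.mulVec, Qhat, slice, Matrix.of_apply]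
  rw [sum_reindex p N]
  refine Finset.sum_congr rfl fun j _ => Finset.sum_congr rfl fun ia _ => ?_
  congr 1
  rw [sum_reindex p N]
  simp only [divNat_emb, modNat_emb]
  rw [Finset.sum_eq_single j]
  · simp
  · intro j' _ hj'
    refine Finset.sum_eq_zero fun i'a' _ => ?_
    rw [if_neg (fun h => hj' h.symm), zero_mul]
  · intro h
    exact absurd (Finset.mem_univ j) h

lemma dot_slice {w : Type*} [Fintype w] (p N : ℕ) (u v : Fin (p * N) × w → ℝ) :
    u ⬝ᵥ v = ∑ j : Fin p, (slice p N u j) ⬝ᵥ (slice p N v j) := by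
  simp only [dotProduct, slice]
  rw [sum_reindex p N (fun ka => u ka * v ka)]

lemma Qhat_isSymm {w : Type*} (p N : ℕ) {Q : Matrix (Fin N × w) (Fin N × w) ℝ}
    (hQ : Q.IsSymm) : (Qhat p N Q).IsSymm := by
  refine Matrix.IsSymm.ext fun r c => ?_
  simp only [Qhat, Matrix.of_apply]
  by_cases h : c.1.divNat = r.1.divNat
  · rw [if_pos h, if_pos h.symm, hQ.apply]
  · rw [if_neg h, if_neg fun hh => h hh.symm]

lemma Qhat_add {w : Type*} (p N : ℕ) (Q₁ Q₂ : Matrix (Fin N × w) (Fin N × w) ℝ) :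
    Qhat p N (Q₁ + Q₂) = Qhat p N Q₁ + Qhat p N Q₂ := by
  ext r c
  simp only [Qhat, Matrix.of_apply, Matrix.add_apply]
  split_ifs <;> simp

lemma Qhat_nonneg {w : Type*} (p N : ℕ) {Q : Matrix (Fin N × w) (Fin N × w) ℝ}
    (hQ : ∀ i j, 0 ≤ Q i j) (r c : Fin (p * N) × w) : 0 ≤ Qhat p N Q r c := by
  simp only [Qhat, Matrix.of_apply]
  split_ifs
  · exact hQ _ _
  · exact le_refl 0

lemma slice_nonneg {w : Type*} (p N : ℕ) {v : Fin (p * N) × w → ℝ}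
    (hv : ∀ i, 0 ≤ v i) (j : Fin p) (ic : Fin N × w) : 0 ≤ slice p N v j ic := hv _

lemma Qhat_posSemidef {w : Type*} [Fintype w] (p N : ℕ)
    {Q : Matrix (Fin N × w) (Fin N × w) ℝ} (hQ : Q.PosSemidef) :
    (Qhat p N Q).PosSemidef := by
  refine Matrix.PosSemidef.of_dotProduct_mulVec_nonneg ?_ ?_
  · rw [Matrix.IsHermitian, Matrix.conjTranspose_eq_transpose_of_trivial]
    exact Qhat_isSymm p N (by
      rw [Matrix.IsSymm, ← Matrix.conjTranspose_eq_transpose_of_trivial]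
      exact hQ.1)
  · intro x
    rw [star_trivial, Qhat_dot]
    exact Finset.sum_nonneg fun j _ => by
      have := hQ.dotProduct_mulVec_nonneg (slice p N x j)
      rwa [star_trivial] at this

lemma Lmat_isSymm {P : Matrix n n ℝ} {Q : Matrix w w ℝ} {γ : ℝ}
    (hP : Pᵀ = P) (hQ : Qᵀ = Q) : (Lmat A B C D P Q γ).IsSymm := by
  unfold Matrix.IsSymm Lmat
  rw [Matrix.transpose_add, Matrix.transpose_mul, Matrix.transpose_mul,
    Matrix.transpose_transpose, Matrix.fromBlocks_transpose, Matrix.fromBlocks_transpose,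
    Matrix.fromBlocks_transpose]
  simp only [Matrix.transpose_neg, Matrix.transpose_zero, Matrix.transpose_one,
    Matrix.transpose_add, Matrix.transpose_smul, hP, hQ]
  rw [Matrix.mul_assoc]

lemma qf_lt_of_posDef {P : Matrix n n ℝ} {Q : Matrix w w ℝ} {γ : ℝ}
    (h : (-(Lmat A B C D P Q γ)).PosDef) (x : n → ℝ) (v : w → ℝ)
    (hne : ¬(x = 0 ∧ v = 0)) : qf A B C D P Q γ x v < 0 := by
  have hv : Sum.elim x v ≠ 0 := by
    intro hh
    exact hne ⟨funext fun i => congrFun hh (Sum.inl i), funext fun i => congrFun hh (Sum.inr i)⟩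
  have := h.dotProduct_mulVec_pos hv
  rw [star_trivial, Matrix.neg_mulVec, dotProduct_neg] at this
  unfold qf
  linarith

lemma qf_nonpos_of_posDef {P : Matrix n n ℝ} {Q : Matrix w w ℝ} {γ : ℝ}
    (h : (-(Lmat A B C D P Q γ)).PosDef) (x : n → ℝ) (v : w → ℝ) :
    qf A B C D P Q γ x v ≤ 0 := by
  by_cases hne : x = 0 ∧ v = 0
  · unfold qf
    rw [hne.1, hne.2]
    simp
  · exact le_of_lt (qf_lt_of_posDef A B C D h x v hne)

lemma posDef_neg_of_qf {P : Matrix n n ℝ} {Q : Matrix w w ℝ} {γ : ℝ}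
    (hsym : (Lmat A B C D P Q γ).IsSymm)
    (h : ∀ (x : n → ℝ) (v : w → ℝ), ¬(x = 0 ∧ v = 0) → qf A B C D P Q γ x v < 0) :
    (-(Lmat A B C D P Q γ)).PosDef := by
  refine Matrix.PosDef.of_dotProduct_mulVec_pos ?_ ?_
  · rw [Matrix.IsHermitian, Matrix.conjTranspose_neg,
      Matrix.conjTranspose_eq_transpose_of_trivial, hsym]
  · intro v hv
    have hne : ¬((v ∘ Sum.inl) = 0 ∧ (v ∘ Sum.inr) = 0) := by
      rintro ⟨h1, h2⟩
      apply hv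
      funext i
      cases i with
      | inl i => exact congrFun h1 i
      | inr i => exact congrFun h2 i
    have := h (v ∘ Sum.inl) (v ∘ Sum.inr) hne
    rw [qf, Sum.elim_comp_inl_inr] at this
    rw [star_trivial, Matrix.neg_mulVec, dotProduct_neg]
    linarith

lemma emb_val {p N : ℕ} (j : Fin p) (i : Fin N) :
    ((finProdFinEquiv (j, i) : Fin (p * N)) : ℕ) = (j : ℕ) * N + (i : ℕ) := by
  simp [finProdFinEquiv]
  ring

lemma qf_lift_sum (N p : ℕ) (P : Matrix n n ℝ) (Q : Matrix (Fin N × w) (Fin N × w) ℝ)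
    (γ : ℝ) (x : n → ℝ) (v : Fin (p * N) × w → ℝ) (ws : ℕ → w → ℝ)
    (hws : ∀ (k : Fin (p * N)) (a : w), ws (k : ℕ) a = v (k, a)) :
    qf (liftA A (p * N)) (liftB A B (p * N)) (liftC A C (p * N)) (liftD A B C D (p * N))
        P (Qhat p N Q) γ x v
      = ∑ j : Fin p,
          qf (liftA A N) (liftB A B N) (liftC A C N) (liftD A B C D N) P Q γ
            (traj A B x ws ((j : ℕ) * N)) (slice p N v j) := by
  have hv : (fun kc : Fin (p * N) × w => ws (kc.1 : ℕ) kc.2) = v := by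
    funext kc
    rw [hws kc.1 kc.2]
  have hslice : ∀ j : Fin p,
      slice p N v j = fun ic : Fin N × w => ws ((j : ℕ) * N + (ic.1 : ℕ)) ic.2 := by
    intro j
    funext ic
    rw [slice, ← hws, emb_val]
  have hstep : ∀ j : Fin p,
      (liftA A N) *ᵥ (traj A B x ws ((j : ℕ) * N)) + (liftB A B N) *ᵥ (slice p N v j)
        = traj A B x ws (((j : ℕ) + 1) * N) := by
    intro j
    rw [hslice j,
      lift_state A B N (traj A B x ws ((j : ℕ) * N)) (fun t => ws ((j : ℕ) * N + t)),
      ← traj_add]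
    congr 1
    ring
  have hfin : (liftA A (p * N)) *ᵥ x + (liftB A B (p * N)) *ᵥ v
      = traj A B x ws (p * N) := by
    conv_lhs => rw [← hv]
    exact lift_state A B (p * N) x ws
  have hout : ∀ (k : Fin (p * N)) (zz : z),
      ((liftC A C (p * N)) *ᵥ x + (liftD A B C D (p * N)) *ᵥ v) (k, zz)
        = (C *ᵥ traj A B x ws (k : ℕ) + D *ᵥ ws (k : ℕ)) zz := by
    intro k zz
    conv_lhs => rw [← hv]
    exact lift_output A B C D (p * N) x ws k zz
  have hsl : ∀ j : Fin p,
      slice p N ((liftC A C (p * N)) *ᵥ x + (liftD A B C D (p * N)) *ᵥ v) j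
        = (liftC A C N) *ᵥ (traj A B x ws ((j : ℕ) * N)) + (liftD A B C D N) *ᵥ (slice p N v j) := by
    intro j
    funext izz
    rw [slice, hout, emb_val, hslice j]
    have h2 := lift_output A B C D N (traj A B x ws ((j : ℕ) * N))
      (fun t => ws ((j : ℕ) * N + t)) izz.1 izz.2
    rw [← traj_add] at h2
    exact h2.symm
  have hzdot : ((liftC A C (p * N)) *ᵥ x + (liftD A B C D (p * N)) *ᵥ v)
        ⬝ᵥ ((liftC A C (p * N)) *ᵥ x + (liftD A B C D (p * N)) *ᵥ v)
      = ∑ j : Fin p,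
          ((liftC A C N) *ᵥ (traj A B x ws ((j : ℕ) * N)) + (liftD A B C D N) *ᵥ (slice p N v j))
          ⬝ᵥ ((liftC A C N) *ᵥ (traj A B x ws ((j : ℕ) * N)) + (liftD A B C D N) *ᵥ (slice p N v j)) := by
    rw [dot_slice p N]
    exact Finset.sum_congr rfl fun j _ => by rw [hsl j]
  have htel : ∑ j : Fin p,
        ((traj A B x ws (((j : ℕ) + 1) * N)) ⬝ᵥ P *ᵥ (traj A B x ws (((j : ℕ) + 1) * N))
          - (traj A B x ws ((j : ℕ) * N)) ⬝ᵥ P *ᵥ (traj A B x ws ((j : ℕ) * N)))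
      = (traj A B x ws (p * N)) ⬝ᵥ P *ᵥ (traj A B x ws (p * N)) - x ⬝ᵥ P *ᵥ x := by
    rw [Fin.sum_univ_eq_sum_range (fun j =>
      (traj A B x ws ((j + 1) * N)) ⬝ᵥ P *ᵥ (traj A B x ws ((j + 1) * N))
        - (traj A B x ws (j * N)) ⬝ᵥ P *ᵥ (traj A B x ws (j * N))) p]
    rw [Finset.sum_range_sub (fun j =>
      (traj A B x ws (j * N)) ⬝ᵥ P *ᵥ (traj A B x ws (j * N)))]
    rw [Nat.zero_mul]
    rfl
  simp only [qf_eq]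
  rw [hfin, hzdot, Qhat_dot p N Q v v, dot_slice p N v v]
  simp only [hstep]
  have hterm : ∀ j : Fin p,
      -(traj A B x ws ((j : ℕ) * N) ⬝ᵥ P *ᵥ traj A B x ws ((j : ℕ) * N))
        + (-γ ^ 2 * (slice p N v j ⬝ᵥ slice p N v j)
          + slice p N v j ⬝ᵥ Q *ᵥ slice p N v j)
        + (traj A B x ws (((j : ℕ) + 1) * N) ⬝ᵥ P *ᵥ traj A B x ws (((j : ℕ) + 1) * N)
          + (liftC A C N *ᵥ traj A B x ws ((j : ℕ) * N) + liftD A B C D N *ᵥ slice p N v j) ⬝ᵥ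
              (liftC A C N *ᵥ traj A B x ws ((j : ℕ) * N) + liftD A B C D N *ᵥ slice p N v j))
      = (traj A B x ws (((j : ℕ) + 1) * N) ⬝ᵥ P *ᵥ traj A B x ws (((j : ℕ) + 1) * N)
          - traj A B x ws ((j : ℕ) * N) ⬝ᵥ P *ᵥ traj A B x ws ((j : ℕ) * N))
        + (-γ ^ 2 * (slice p N v j ⬝ᵥ slice p N v j)
          + slice p N v j ⬝ᵥ Q *ᵥ slice p N v j
          + (liftC A C N *ᵥ traj A B x ws ((j : ℕ) * N) + liftD A B C D N *ᵥ slice p N v j) ⬝ᵥ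
              (liftC A C N *ᵥ traj A B x ws ((j : ℕ) * N) + liftD A B C D N *ᵥ slice p N v j)) :=
    fun j => by ring
  rw [Finset.sum_congr rfl fun j _ => hterm j]
  rw [Finset.sum_add_distrib, htel, Finset.sum_add_distrib, Finset.sum_add_distrib,
    ← Finset.mul_sum]
  ring

lemma emb_divmod {p N : ℕ} (k : Fin (p * N)) :
    finProdFinEquiv (k.divNat, k.modNat) = k :=
  finProdFinEquiv.apply_symm_apply k

lemma feas_step (N p : ℕ) (hp : 0 < p) (P : Matrix n n ℝ)
    (Q : Matrix (Fin N × w) (Fin N × w) ℝ) (γ : ℝ)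
    (hPsymm : Pᵀ = P) (hQsymm : Q.IsSymm)
    (hL : (-(Lmat (liftA A N) (liftB A B N) (liftC A C N) (liftD A B C D N) P Q γ)).PosDef) :
    (-(Lmat (liftA A (p * N)) (liftB A B (p * N)) (liftC A C (p * N)) (liftD A B C D (p * N))
      P (Qhat p N Q) γ)).PosDef := by
  apply posDef_neg_of_qf
  · exact Lmat_isSymm _ _ _ _ hPsymm (Qhat_isSymm p N hQsymm)
  · intro x v hne
    set ws : ℕ → w → ℝ := fun k a => if h : k < p * N then v (⟨k, h⟩, a) else 0 with hws_def
    have hws : ∀ (k : Fin (p * N)) (a : w), ws (k : ℕ) a = v (k, a) := by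
      intro k a
      simp [hws_def, k.2]
    rw [qf_lift_sum A B C D N p P Q γ x v ws hws]
    obtain ⟨j0, hj0⟩ : ∃ j : Fin p,
        ¬(traj A B x ws ((j : ℕ) * N) = 0 ∧ slice p N v j = 0) := by
      by_cases hx : x = 0
      · have hv : v ≠ 0 := fun h => hne ⟨hx, h⟩
        obtain ⟨ka, hka⟩ := Function.ne_iff.mp hv
        refine ⟨ka.1.divNat, fun hc => hka ?_⟩
        have h0 : slice p N v ka.1.divNat (ka.1.modNat, ka.2) = 0 := by rw [hc.2]; rfl
        rw [slice, emb_divmod] at h0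
        simpa using h0
      · refine ⟨⟨0, hp⟩, fun hc => hx ?_⟩
        have h0 := hc.1
        rw [show (((⟨0, hp⟩ : Fin p) : ℕ)) * N = 0 by simp] at h0
        exact h0
    have hsum : ∑ j : Fin p,
        qf (liftA A N) (liftB A B N) (liftC A C N) (liftD A B C D N) P Q γ
          (traj A B x ws ((j : ℕ) * N)) (slice p N v j) < ∑ _j : Fin p, (0 : ℝ) := by
      refine Finset.sum_lt_sum
        (fun j _ => qf_nonpos_of_posDef (liftA A N) (liftB A B N) (liftC A C N)
          (liftD A B C D N) hL _ _)
        ⟨j0, Finset.mem_univ j0, qf_lt_of_posDef (liftA A N) (liftB A B N) (liftC A C N)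
          (liftD A B C D N) hL _ _ hj0⟩
    simpa using hsum

lemma dotProduct_self_nonneg {m : Type*} [Fintype m] (v : m → ℝ) : 0 ≤ v ⬝ᵥ v :=
  Finset.sum_nonneg fun i _ => mul_self_nonneg _

lemma quad_lower {m : Type*} [Fintype m] (M : Matrix m m ℝ)
    (h : ∀ x : m → ℝ, x ≠ 0 → 0 < x ⬝ᵥ M *ᵥ x) :
    ∃ c > 0, ∀ x : m → ℝ, c * (x ⬝ᵥ x) ≤ x ⬝ᵥ M *ᵥ x := by
  rcases isEmpty_or_nonempty m with hm | hm
  · refine ⟨1, one_pos, fun x => ?_⟩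
    simp [dotProduct]
  have hcont : Continuous fun x : m → ℝ => x ⬝ᵥ M *ᵥ x := by
    have h0 : (fun x : m → ℝ => x ⬝ᵥ M *ᵥ x)
        = fun x => ∑ i, x i * ∑ j, M i j * x j := rfl
    rw [h0]
    exact continuous_finset_sum _ fun i _ => (continuous_apply i).mul
      (continuous_finset_sum _ fun j _ => continuous_const.mul (continuous_apply j))
  have hone : (fun _ => 1 : m → ℝ) ∈ Metric.sphere (0 : m → ℝ) 1 := by
    rw [mem_sphere_zero_iff_norm]
    simp
  obtain ⟨x₀, hx₀, hmin'⟩ := (isCompact_sphere (0 : m → ℝ) 1).exists_isMinOn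
    ⟨_, hone⟩ hcont.continuousOn
  have hmin : ∀ y ∈ Metric.sphere (0 : m → ℝ) 1, x₀ ⬝ᵥ M *ᵥ x₀ ≤ y ⬝ᵥ M *ᵥ y :=
    fun y hy => hmin' hy
  have hx₀n : ‖x₀‖ = 1 := mem_sphere_zero_iff_norm.mp hx₀
  have hx₀0 : x₀ ≠ 0 := by
    intro h0
    rw [h0] at hx₀n
    simp at hx₀n
  have hcpos : 0 < x₀ ⬝ᵥ M *ᵥ x₀ := h x₀ hx₀0
  have hcard : 0 < (Fintype.card m : ℝ) := by
    have := Fintype.card_pos (α := m)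
    positivity
  refine ⟨(x₀ ⬝ᵥ M *ᵥ x₀) / (Fintype.card m), div_pos hcpos hcard, fun x => ?_⟩
  by_cases hx : x = 0
  · simp [hx]
  have ht : 0 < ‖x‖ := norm_pos_iff.mpr hx
  have hu : (‖x‖⁻¹ • x) ∈ Metric.sphere (0 : m → ℝ) 1 := by
    rw [mem_sphere_zero_iff_norm, norm_smul, norm_inv, norm_norm, inv_mul_cancel₀ ht.ne']
  have hmin' := hmin _ hu
  have hscale : (‖x‖⁻¹ • x) ⬝ᵥ M *ᵥ (‖x‖⁻¹ • x) = (‖x‖⁻¹)^2 * (x ⬝ᵥ M *ᵥ x) := by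
    rw [Matrix.mulVec_smul, smul_dotProduct, dotProduct_smul]
    simp [smul_eq_mul]
    ring
  rw [hscale] at hmin'
  have h2 : x ⬝ᵥ x ≤ (Fintype.card m : ℝ) * ‖x‖^2 := by
    have h3 : ∀ i, x i * x i ≤ ‖x‖^2 := fun i => by
      have h4 := norm_le_pi_norm x i
      rw [Real.norm_eq_abs] at h4
      nlinarith [abs_nonneg (x i), le_abs_self (x i), neg_abs_le (x i)]
    calc x ⬝ᵥ x = ∑ i, x i * x i := rfl
    _ ≤ ∑ _i : m, ‖x‖^2 := Finset.sum_le_sum fun i _ => h3 i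
    _ = (Fintype.card m : ℝ) * ‖x‖^2 := by simp [Finset.sum_const, nsmul_eq_mul]
  have h5 : (x₀ ⬝ᵥ M *ᵥ x₀) * ‖x‖^2 ≤ x ⬝ᵥ M *ᵥ x := by
    have h6 := mul_le_mul_of_nonneg_left hmin' (sq_nonneg ‖x‖)
    have h7 : ‖x‖^2 * ((‖x‖⁻¹)^2 * (x ⬝ᵥ M *ᵥ x)) = x ⬝ᵥ M *ᵥ x := by
      field_simp
    rw [h7] at h6
    linarith
  rw [div_mul_eq_mul_div, div_le_iff₀ hcard]
  nlinarith [hcpos, h2, h5, sq_nonneg ‖x‖]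

lemma cs_bound {ι κ : Type*} [Fintype ι] [Fintype κ] (E : Matrix ι κ ℝ)
    (u : ι → ℝ) (v : κ → ℝ) :
    (u ⬝ᵥ E *ᵥ v)^2 ≤ (∑ i, ∑ j, (E i j)^2) * ((u ⬝ᵥ u) * (v ⬝ᵥ v)) := by
  have h1 : (u ⬝ᵥ E *ᵥ v)^2 ≤ (∑ i, (u i)^2) * (∑ i, ((E *ᵥ v) i)^2) :=
    Finset.sum_mul_sq_le_sq_mul_sq _ _ _
  have h2 : ∀ i, ((E *ᵥ v) i)^2 ≤ (∑ j, (E i j)^2) * (∑ j, (v j)^2) := fun i =>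
    Finset.sum_mul_sq_le_sq_mul_sq _ _ _
  have h3 : ∑ i, ((E *ᵥ v) i)^2 ≤ (∑ i, ∑ j, (E i j)^2) * (∑ j, (v j)^2) := by
    rw [Finset.sum_mul]
    exact Finset.sum_le_sum fun i _ => h2 i
  have hu : (∑ i, (u i)^2) = u ⬝ᵥ u := by simp [dotProduct, sq]
  have hv : (∑ j, (v j)^2) = v ⬝ᵥ v := by simp [dotProduct, sq]
  have hu0 : 0 ≤ ∑ i, (u i)^2 := Finset.sum_nonneg fun i _ => sq_nonneg _
  calc (u ⬝ᵥ E *ᵥ v)^2 ≤ (∑ i, (u i)^2) * (∑ i, ((E *ᵥ v) i)^2) := h1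
  _ ≤ (∑ i, (u i)^2) * ((∑ i, ∑ j, (E i j)^2) * (∑ j, (v j)^2)) :=
      mul_le_mul_of_nonneg_left h3 hu0
  _ = (∑ i, ∑ j, (E i j)^2) * ((u ⬝ᵥ u) * (v ⬝ᵥ v)) := by rw [hu, hv]; ring

lemma young_bound {ι κ : Type*} [Fintype ι] [Fintype κ] (E : Matrix ι κ ℝ)
    (c : ℝ) (hc : 0 < c) :
    ∃ d : ℝ, ∀ (u : ι → ℝ) (v : κ → ℝ),
      2 * (u ⬝ᵥ E *ᵥ v) ≤ c * (u ⬝ᵥ u) + d * (v ⬝ᵥ v) := by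
  set F := ∑ i, ∑ j, (E i j)^2 with hF
  have hF0 : 0 ≤ F := Finset.sum_nonneg fun i _ => Finset.sum_nonneg fun j _ => sq_nonneg _
  refine ⟨F / c, fun u v => ?_⟩
  have hcs := cs_bound E u v
  have hu := dotProduct_self_nonneg u
  have hv := dotProduct_self_nonneg v
  rw [div_mul_eq_mul_div, ← sub_nonneg]
  rw [show c * (u ⬝ᵥ u) + F * (v ⬝ᵥ v) / c - 2 * (u ⬝ᵥ E *ᵥ v)
    = (c^2 * (u ⬝ᵥ u) + F * (v ⬝ᵥ v) - 2 * c * (u ⬝ᵥ E *ᵥ v)) / c by field_simp]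
  apply div_nonneg _ hc.le
  rw [← hF] at hcs
  have key : (2 * c * (u ⬝ᵥ E *ᵥ v))^2 ≤ (c^2 * (u ⬝ᵥ u) + F * (v ⬝ᵥ v))^2 := by
    nlinarith [sq_nonneg (c^2 * (u ⬝ᵥ u) - F * (v ⬝ᵥ v)),
      mul_nonneg (mul_pos hc hc).le (sub_nonneg.mpr hcs)]
  have hX0 : 0 ≤ c^2 * (u ⬝ᵥ u) + F * (v ⬝ᵥ v) :=
    add_nonneg (mul_nonneg (sq_nonneg c) hu) (mul_nonneg hF0 hv)
  nlinarith [key, hX0]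

lemma quad_upper {κ : Type*} [Fintype κ] (R : Matrix κ κ ℝ) :
    ∃ r : ℝ, ∀ v : κ → ℝ, v ⬝ᵥ R *ᵥ v ≤ r * (v ⬝ᵥ v) := by
  set F := ∑ i, ∑ j, (R i j)^2 with hF
  have hF0 : 0 ≤ F := Finset.sum_nonneg fun i _ => Finset.sum_nonneg fun j _ => sq_nonneg _
  refine ⟨Real.sqrt F, fun v => ?_⟩
  have hcs := cs_bound R v v
  have hs : Real.sqrt F ^ 2 = F := Real.sq_sqrt hF0
  have hv := dotProduct_self_nonneg v
  rw [← hF] at hcs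
  have key : (v ⬝ᵥ R *ᵥ v)^2 ≤ (Real.sqrt F * (v ⬝ᵥ v))^2 := by
    rw [mul_pow, hs]
    nlinarith [hcs]
  have hX0 : 0 ≤ Real.sqrt F * (v ⬝ᵥ v) := mul_nonneg (Real.sqrt_nonneg F) hv
  nlinarith [key, hX0]

lemma traj_zero (x : n → ℝ) (k : ℕ) : traj A B x 0 k = (A ^ k) *ᵥ x := by
  induction k with
  | zero => simp [traj]
  | succ k ih =>
      rw [show traj A B x 0 (k + 1) = A *ᵥ (traj A B x 0 k) + B *ᵥ (0 : ℕ → w → ℝ) k from rfl,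
        ih]
      simp [Matrix.mulVec_mulVec, ← pow_succ']

lemma dot_trans {a b : Type*} [Fintype a] [Fintype b] (N : Matrix a n ℝ) (K : Matrix a b ℝ)
    (N' : Matrix b w ℝ) (x : n → ℝ) (v : w → ℝ) :
    x ⬝ᵥ (Nᵀ * K * N') *ᵥ v = (N *ᵥ x) ⬝ᵥ K *ᵥ (N' *ᵥ v) := by
  rw [← Matrix.mulVec_mulVec, ← Matrix.mulVec_mulVec, Matrix.dotProduct_mulVec,
    Matrix.vecMul_transpose]

lemma dot_self_trans {a : Type*} [Fintype a] (N : Matrix a n ℝ) (x y : n → ℝ) :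
    x ⬝ᵥ (Nᵀ * N) *ᵥ y = (N *ᵥ x) ⬝ᵥ (N *ᵥ y) := by
  rw [← Matrix.mulVec_mulVec, Matrix.dotProduct_mulVec, Matrix.vecMul_transpose]

lemma sum_mulVec {a b ι : Type*} [Fintype a] [Fintype b] (s : Finset ι)
    (f : ι → Matrix a b ℝ) (y : b → ℝ) :
    (∑ i ∈ s, f i) *ᵥ y = ∑ i ∈ s, (f i) *ᵥ y := by
  ext r
  simp only [Matrix.mulVec, dotProduct, Matrix.sum_apply, Finset.sum_apply, Finset.sum_mul]
  rw [Finset.sum_comm]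

lemma psd_smul {m : Type*} [Fintype m] {M : Matrix m m ℝ} (hM : M.PosSemidef)
    {c : ℝ} (hc : 0 ≤ c) : (c • M).PosSemidef := by
  refine Matrix.PosSemidef.of_dotProduct_mulVec_nonneg ?_ ?_
  · rw [Matrix.IsHermitian, Matrix.conjTranspose_smul, hM.1]
    congr 1
  · intro x
    rw [Matrix.smul_mulVec, dotProduct_smul, smul_eq_mul]
    exact mul_nonneg hc (by simpa using hM.dotProduct_mulVec_nonneg x)

lemma psd_sum {m ι : Type*} [Fintype m] (s : Finset ι) (f : ι → Matrix m m ℝ)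
    (hf : ∀ i ∈ s, (f i).PosSemidef) : (∑ i ∈ s, f i).PosSemidef := by
  classical
  induction s using Finset.induction_on with
  | empty => simpa using Matrix.PosSemidef.zero
  | @insert a s hnotmem ih =>
      rw [Finset.sum_insert hnotmem]
      exact Matrix.PosSemidef.add (hf _ (Finset.mem_insert_self _ _))
        (ih fun i hi => hf i (Finset.mem_insert_of_mem hi))

lemma dot_sum {b ι : Type*} [Fintype b] (s : Finset ι) (y : b → ℝ) (f : ι → b → ℝ) :
    y ⬝ᵥ (∑ i ∈ s, f i) = ∑ i ∈ s, y ⬝ᵥ f i := by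
  simp only [dotProduct, Finset.sum_apply, Finset.mul_sum]
  rw [Finset.sum_comm]

lemma exists_P1 {ζ : Type*} [Fintype ζ] (A1 : Matrix n n ℝ) (C1 : Matrix ζ n ℝ)
    (P : Matrix n n ℝ) (hP : P.PosSemidef) (p : ℕ) (hp : 0 < p)
    (h2 : ∀ x : n → ℝ, x ≠ 0 →
      ((A1 ^ p) *ᵥ x) ⬝ᵥ P *ᵥ ((A1 ^ p) *ᵥ x) - x ⬝ᵥ P *ᵥ x
        + ∑ j ∈ Finset.range p, (C1 *ᵥ ((A1 ^ j) *ᵥ x)) ⬝ᵥ (C1 *ᵥ ((A1 ^ j) *ᵥ x)) < 0) :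
    ∃ P₁ : Matrix n n ℝ, P₁.PosSemidef ∧ ∀ x : n → ℝ, x ≠ 0 →
      (A1 *ᵥ x) ⬝ᵥ P₁ *ᵥ (A1 *ᵥ x) - x ⬝ᵥ P₁ *ᵥ x + (C1 *ᵥ x) ⬝ᵥ (C1 *ᵥ x) < 0 := by
  set P₁ : Matrix n n ℝ :=
    ∑ i ∈ Finset.range p, ((A1 ^ i)ᵀ * P * (A1 ^ i))
      + ∑ j ∈ Finset.range p, (((p : ℝ) - 1 - (j : ℝ)) • ((C1 * A1 ^ j)ᵀ * (C1 * A1 ^ j)))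
    with hP₁
  have hpsd : P₁.PosSemidef := by
    apply Matrix.PosSemidef.add
    · refine psd_sum _ _ fun i _ => ?_
      have := hP.conjTranspose_mul_mul_same (A1 ^ i)
      rwa [Matrix.conjTranspose_eq_transpose_of_trivial] at this
    · refine psd_sum _ _ fun j hj => ?_
      have hj' := Finset.mem_range.mp hj
      refine psd_smul ?_ (by
        have : (j : ℝ) ≤ (p : ℝ) - 1 := by
          have : (j : ℝ) + 1 ≤ (p : ℝ) := by exact_mod_cast hj'
          linarith
        linarith)
      have := (Matrix.posSemidef_conjTranspose_mul_self (C1 * A1 ^ j))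
      rwa [Matrix.conjTranspose_eq_transpose_of_trivial] at this
  have hquad : ∀ y : n → ℝ, y ⬝ᵥ P₁ *ᵥ y
      = ∑ i ∈ Finset.range p, ((A1 ^ i) *ᵥ y) ⬝ᵥ P *ᵥ ((A1 ^ i) *ᵥ y)
        + ∑ j ∈ Finset.range p, ((p : ℝ) - 1 - (j : ℝ))
            * (((C1 * A1 ^ j) *ᵥ y) ⬝ᵥ ((C1 * A1 ^ j) *ᵥ y)) := by
    intro y
    rw [hP₁, Matrix.add_mulVec, dotProduct_add, sum_mulVec, sum_mulVec,
      dot_sum, dot_sum]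
    congr 1
    · exact Finset.sum_congr rfl fun i _ => dot_trans _ _ _ _ _
    · refine Finset.sum_congr rfl fun j _ => ?_
      rw [Matrix.smul_mulVec, dotProduct_smul, smul_eq_mul, dot_self_trans]
  refine ⟨P₁, hpsd, fun x hx => ?_⟩
  set w : ℕ → ℝ := fun i => ((A1 ^ i) *ᵥ x) ⬝ᵥ P *ᵥ ((A1 ^ i) *ᵥ x) with hw
  set cc : ℕ → ℝ := fun j => ((C1 * A1 ^ j) *ᵥ x) ⬝ᵥ ((C1 * A1 ^ j) *ᵥ x) with hcc
  set g : ℕ → ℝ := fun j => ((p : ℝ) - (j : ℝ)) * cc j with hg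
  have hshift : ∀ i : ℕ, (A1 ^ i) *ᵥ (A1 *ᵥ x) = (A1 ^ (i + 1)) *ᵥ x := by
    intro i
    rw [Matrix.mulVec_mulVec, ← pow_succ]
  have hshiftC : ∀ j : ℕ, (C1 * A1 ^ j) *ᵥ (A1 *ᵥ x) = (C1 * A1 ^ (j + 1)) *ᵥ x := by
    intro j
    rw [Matrix.mulVec_mulVec, Matrix.mul_assoc, ← Matrix.mulVec_mulVec, Matrix.mulVec_mulVec,
      ← pow_succ]
  have hquadA : (A1 *ᵥ x) ⬝ᵥ P₁ *ᵥ (A1 *ᵥ x)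
      = ∑ i ∈ Finset.range p, w (i + 1)
        + ∑ j ∈ Finset.range p, ((p : ℝ) - 1 - (j : ℝ)) * cc (j + 1) := by
    rw [hquad (A1 *ᵥ x)]
    congr 1
    · exact Finset.sum_congr rfl fun i _ => by rw [hw]; simp only; rw [hshift i]
    · exact Finset.sum_congr rfl fun j _ => by rw [hcc]; simp only; rw [hshiftC j]
  have hquadx : x ⬝ᵥ P₁ *ᵥ x
      = ∑ i ∈ Finset.range p, w i
        + ∑ j ∈ Finset.range p, ((p : ℝ) - 1 - (j : ℝ)) * cc j := hquad x
  have hsub : (A1 *ᵥ x) ⬝ᵥ P₁ *ᵥ (A1 *ᵥ x) - x ⬝ᵥ P₁ *ᵥ x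
      = (w p - w 0) + ((g p - g 0) + ∑ j ∈ Finset.range p, cc j) := by
    rw [hquadA, hquadx]
    have e1 : ∑ i ∈ Finset.range p, w (i + 1) - ∑ i ∈ Finset.range p, w i
        = w p - w 0 := by
      rw [← Finset.sum_sub_distrib, Finset.sum_range_sub w]
    have e2 : ∑ j ∈ Finset.range p, ((p : ℝ) - 1 - (j : ℝ)) * cc (j + 1)
          - ∑ j ∈ Finset.range p, ((p : ℝ) - 1 - (j : ℝ)) * cc j
        = (g p - g 0) + ∑ j ∈ Finset.range p, cc j := by
      rw [← Finset.sum_sub_distrib, ← Finset.sum_range_sub g, ← Finset.sum_add_distrib]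
      refine Finset.sum_congr rfl fun j _ => ?_
      rw [hg]
      simp only
      push_cast
      ring
    linarith
  have hgp : g p = 0 := by
    rw [hg]
    simp
  have hg0 : g 0 = (p : ℝ) * cc 0 := by
    rw [hg]
    simp
  have hcc0 : (C1 *ᵥ x) ⬝ᵥ (C1 *ᵥ x) = cc 0 := by
    rw [hcc]
    simp
  have hw0 : w 0 = x ⬝ᵥ P *ᵥ x := by
    rw [hw]
    simp
  have hccj : ∀ j, cc j = (C1 *ᵥ ((A1 ^ j) *ᵥ x)) ⬝ᵥ (C1 *ᵥ ((A1 ^ j) *ᵥ x)) := by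
    intro j
    rw [hcc]
    simp only
    rw [← Matrix.mulVec_mulVec]
  have hccnn : 0 ≤ cc 0 := by
    rw [hcc]
    exact dotProduct_self_nonneg _
  have hp1 : (1 : ℝ) ≤ (p : ℝ) := by exact_mod_cast hp
  have hmain := h2 x hx
  rw [Finset.sum_congr rfl fun j _ => (hccj j).symm] at hmain
  rw [hsub, hgp, hg0, hcc0, hw0]
  nlinarith [hmain, hccnn, hp1]

lemma dot_trans2 {a : Type*} [Fintype a] (N : Matrix a n ℝ) (N' : Matrix a w ℝ)
    (x : n → ℝ) (v : w → ℝ) :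
    x ⬝ᵥ (Nᵀ * N') *ᵥ v = (N *ᵥ x) ⬝ᵥ (N' *ᵥ v) := by
  rw [← Matrix.mulVec_mulVec, Matrix.dotProduct_mulVec, Matrix.vecMul_transpose]

lemma dot_mulVec_symm {m : Type*} [Fintype m] {M : Matrix m m ℝ} (hM : Mᵀ = M)
    (u v : m → ℝ) : u ⬝ᵥ M *ᵥ v = v ⬝ᵥ M *ᵥ u := by
  have h1 : u ⬝ᵥ M *ᵥ v = (M *ᵥ u) ⬝ᵥ v := by
    rw [Matrix.dotProduct_mulVec]
    nth_rewrite 1 [← hM]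
    rw [Matrix.vecMul_transpose]
  rw [h1, dotProduct_comm]

lemma feas_back (N p : ℕ) (hp : 0 < p) (P : Matrix n n ℝ)
    (Q : Matrix (Fin (p * N) × w) (Fin (p * N) × w) ℝ) (γ : ℝ)
    (hP : P.PosSemidef)
    (hL : (-(Lmat (liftA A (p * N)) (liftB A B (p * N)) (liftC A C (p * N))
      (liftD A B C D (p * N)) P Q γ)).PosDef) :
    ∃ γ' > 0, ∃ P₁ : Matrix n n ℝ, P₁.PosSemidef ∧
      (-(Lmat (liftA A N) (liftB A B N) (liftC A C N) (liftD A B C D N) P₁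
        (0 : Matrix (Fin N × w) (Fin N × w) ℝ) γ')).PosDef := by
  -- the p-step dissipation inequality in the x variable
  have hq2 : ∀ x : n → ℝ, x ≠ 0 →
      (((liftA A N) ^ p) *ᵥ x) ⬝ᵥ P *ᵥ (((liftA A N) ^ p) *ᵥ x) - x ⬝ᵥ P *ᵥ x
        + ∑ j ∈ Finset.range p,
            ((liftC A C N) *ᵥ (((liftA A N) ^ j) *ᵥ x))
              ⬝ᵥ ((liftC A C N) *ᵥ (((liftA A N) ^ j) *ᵥ x)) < 0 := by
    intro x hx
    have h1 := qf_lt_of_posDef _ _ _ _ hL x 0 (fun hc => hx hc.1)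
    rw [qf_eq] at h1
    simp only [Matrix.mulVec_zero, add_zero, dotProduct_zero, mul_zero] at h1
    -- liftA A (p*N) = (liftA A N) ^ p
    have hA2 : liftA A (p * N) = (liftA A N) ^ p := by
      rw [liftA, liftA, mul_comm p N, pow_mul]
    -- output decomposition
    have hC2 : ((liftC A C (p * N)) *ᵥ x) ⬝ᵥ ((liftC A C (p * N)) *ᵥ x)
        = ∑ j ∈ Finset.range p,
            ((liftC A C N) *ᵥ (((liftA A N) ^ j) *ᵥ x))
              ⬝ᵥ ((liftC A C N) *ᵥ (((liftA A N) ^ j) *ᵥ x)) := by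
      have hws0 : ∀ (k : Fin (p * N)) (a : w),
          (0 : ℕ → w → ℝ) (k : ℕ) a = (0 : Fin (p * N) × w → ℝ) (k, a) := fun _ _ => rfl
      have hdec := qf_lift_sum A B C D N p (0 : Matrix n n ℝ)
        (0 : Matrix (Fin N × w) (Fin N × w) ℝ) 0 x (0 : Fin (p * N) × w → ℝ)
        (0 : ℕ → w → ℝ) hws0
      have hsl0 : ∀ j : Fin p, slice p N (0 : Fin (p * N) × w → ℝ) j = 0 := fun j => rfl
      simp only [qf_eq, hsl0, Matrix.zero_mulVec, Matrix.mulVec_zero, zero_dotProduct,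
        dotProduct_zero, add_zero, zero_add, neg_zero, mul_zero, ne_eq] at hdec
      rw [hdec]
      rw [Fin.sum_univ_eq_sum_range (fun j => ((liftC A C N) *ᵥ traj A B x 0 (j * N))
        ⬝ᵥ ((liftC A C N) *ᵥ traj A B x 0 (j * N))) p]
      refine Finset.sum_congr rfl fun j _ => ?_
      rw [traj_zero]
      congr 2 <;>
        rw [show A ^ (j * N) = (liftA A N) ^ j by rw [liftA, mul_comm j N, pow_mul]]
    rw [hA2] at h1
    rw [← hC2]
    linarith
  obtain ⟨P₁, hpsd, hT⟩ := exists_P1 (liftA A N) (liftC A C N) P hP p hp hq2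
  have hP₁symm : P₁ᵀ = P₁ := by
    have := hpsd.1
    rwa [Matrix.IsHermitian, Matrix.conjTranspose_eq_transpose_of_trivial] at this
  set A1 := liftA A N
  set B1 := liftB A B N
  set C1 := liftC A C N
  set D1 := liftD A B C D N
  set Ttot : Matrix n n ℝ := P₁ - A1ᵀ * P₁ * A1 - C1ᵀ * C1 with hTtot
  have hTq : ∀ x : n → ℝ, x ⬝ᵥ Ttot *ᵥ x
      = x ⬝ᵥ P₁ *ᵥ x - (A1 *ᵥ x) ⬝ᵥ P₁ *ᵥ (A1 *ᵥ x) - (C1 *ᵥ x) ⬝ᵥ (C1 *ᵥ x) := by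
    intro x
    rw [hTtot, Matrix.sub_mulVec, Matrix.sub_mulVec, dotProduct_sub, dotProduct_sub,
      dot_trans, dot_self_trans]
  have hTpos : ∀ x : n → ℝ, x ≠ 0 → 0 < x ⬝ᵥ Ttot *ᵥ x := by
    intro x hx
    rw [hTq]
    have := hT x hx
    linarith
  obtain ⟨c, hc0, hc⟩ := quad_lower Ttot hTpos
  set E : Matrix n (Fin N × w) ℝ := A1ᵀ * P₁ * B1 + C1ᵀ * D1 with hE
  set R : Matrix (Fin N × w) (Fin N × w) ℝ := B1ᵀ * P₁ * B1 + D1ᵀ * D1 with hR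
  obtain ⟨d, hd⟩ := young_bound E c hc0
  obtain ⟨r, hr⟩ := quad_upper R
  set γ' := Real.sqrt (|r| + |d| + 1) with hγ'
  have hγ'pos : 0 < γ' := Real.sqrt_pos.mpr (by positivity)
  have hγ'sq : γ' ^ 2 = |r| + |d| + 1 := Real.sq_sqrt (by positivity)
  have hqfid : ∀ (x : n → ℝ) (v : Fin N × w → ℝ),
      qf A1 B1 C1 D1 P₁ (0 : Matrix (Fin N × w) (Fin N × w) ℝ) γ' x v
        = -(x ⬝ᵥ Ttot *ᵥ x) + 2 * (x ⬝ᵥ E *ᵥ v) + v ⬝ᵥ R *ᵥ v - γ' ^ 2 * (v ⬝ᵥ v) := by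
    intro x v
    rw [qf_eq]
    have e1 : (A1 *ᵥ x + B1 *ᵥ v) ⬝ᵥ P₁ *ᵥ (A1 *ᵥ x + B1 *ᵥ v)
        = (A1 *ᵥ x) ⬝ᵥ P₁ *ᵥ (A1 *ᵥ x) + 2 * (x ⬝ᵥ (A1ᵀ * P₁ * B1) *ᵥ v)
          + v ⬝ᵥ (B1ᵀ * P₁ * B1) *ᵥ v := by
      rw [Matrix.mulVec_add, dotProduct_add, add_dotProduct, add_dotProduct,
        dot_mulVec_symm hP₁symm (B1 *ᵥ v) (A1 *ᵥ x), ← dot_trans A1 P₁ B1 x v,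
        ← dot_trans B1 P₁ B1 v v]
      ring
    have e2 : (C1 *ᵥ x + D1 *ᵥ v) ⬝ᵥ (C1 *ᵥ x + D1 *ᵥ v)
        = (C1 *ᵥ x) ⬝ᵥ (C1 *ᵥ x) + 2 * (x ⬝ᵥ (C1ᵀ * D1) *ᵥ v)
          + v ⬝ᵥ (D1ᵀ * D1) *ᵥ v := by
      rw [dotProduct_add, add_dotProduct, add_dotProduct,
        dotProduct_comm (D1 *ᵥ v) (C1 *ᵥ x), ← dot_trans2 C1 D1 x v,
        ← dot_self_trans D1 v v]
      ring
    have e3 : x ⬝ᵥ E *ᵥ v = x ⬝ᵥ (A1ᵀ * P₁ * B1) *ᵥ v + x ⬝ᵥ (C1ᵀ * D1) *ᵥ v := by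
      rw [hE, Matrix.add_mulVec, dotProduct_add]
    have e4 : v ⬝ᵥ R *ᵥ v = v ⬝ᵥ (B1ᵀ * P₁ * B1) *ᵥ v + v ⬝ᵥ (D1ᵀ * D1) *ᵥ v := by
      rw [hR, Matrix.add_mulVec, dotProduct_add]
    rw [e1, e2, e3, e4, hTq]
    simp only [Matrix.zero_mulVec, dotProduct_zero]
    ring
  refine ⟨γ', hγ'pos, P₁, hpsd, posDef_neg_of_qf _ _ _ _ (Lmat_isSymm _ _ _ _ hP₁symm
    Matrix.transpose_zero) ?_⟩
  intro x v hne
  rw [hqfid]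
  by_cases hv : v = 0
  · have hx : x ≠ 0 := fun h => hne ⟨h, hv⟩
    have h5 := hc x
    have h6 : 0 < x ⬝ᵥ x := by
      rcases lt_or_eq_of_le (dotProduct_self_nonneg x) with h | h
      · exact h
      · exact absurd (dotProduct_self_eq_zero.mp h.symm) hx
    rw [hv]
    simp only [Matrix.mulVec_zero, dotProduct_zero, mul_zero, add_zero, sub_zero]
    nlinarith [mul_pos hc0 h6]
  · have hvv : 0 < v ⬝ᵥ v := by
      rcases lt_or_eq_of_le (dotProduct_self_nonneg v) with h | h
      · exact h
      · exact absurd (dotProduct_self_eq_zero.mp h.symm) hv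
    have h5 := hc x
    have h6 := hd x v
    have h7 := hr v
    nlinarith [le_abs_self r, le_abs_self d, hγ'sq]


lemma sInf_le_sInf_special {S₁ S₂ : Set ℝ} (hpos : ∀ γ ∈ S₂, (0:ℝ) ≤ γ) (hsub : S₁ ⊆ S₂)
    (hback : S₂.Nonempty → S₁.Nonempty) : sInf S₂ ≤ sInf S₁ := by
  rcases Set.eq_empty_or_nonempty S₁ with h | h
  · have h2 : S₂ = ∅ := by
      by_contra hne
      exact (Set.not_nonempty_iff_eq_empty.mpr h)
        (hback (Set.nonempty_iff_ne_empty.mpr hne))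
    rw [h, h2]
  · exact csInf_le_csInf ⟨0, hpos⟩ h hsub

end Stmt5Aux

/-- the upper bounds γ̄_{N+} and γ̄̄_{N+} do not deteriorate when the
lifting order is multiplied: γ̄_{pN₁+} ≤ γ̄_{N₁+} and γ̄̄_{pN₁+} ≤ γ̄̄_{N₁+}. -/
theorem stmt_5 (n nw nz : ℕ)
    (A : Matrix (Fin n) (Fin n) ℝ) (B : Matrix (Fin n) (Fin nw) ℝ)
    (C : Matrix (Fin nz) (Fin n) ℝ) (D : Matrix (Fin nz) (Fin nw) ℝ)
    (N₁ N₂ p : ℕ) (hN₁ : 0 < N₁) (hp : 0 < p) (hN₂ : N₂ = p * N₁) :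
    gammaBarPlus A B C D N₂ ≤ gammaBarPlus A B C D N₁ ∧
    gammaBarBarPlus A B C D N₂ ≤ gammaBarBarPlus A B C D N₁ := by
  subst hN₂
  have hPsymm : ∀ (P : Matrix (Fin n) (Fin n) ℝ), P.PosSemidef → Pᵀ = P := by
    intro P hP
    have := hP.1
    rwa [Matrix.IsHermitian, Matrix.conjTranspose_eq_transpose_of_trivial] at this
  constructor
  · -- gammaBarPlus
    apply Stmt5Aux.sInf_le_sInf_special
    · exact fun γ hγ => le_of_lt hγ.1
    · rintro γ ⟨hγ, P, Q, hP, hQ, hLpd⟩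
      refine ⟨hγ, P, Stmt5Aux.Qhat p N₁ Q, hP,
        ⟨Stmt5Aux.Qhat_isSymm p N₁ hQ.1, fun x hx => ?_⟩, ?_⟩
      · rw [Stmt5Aux.Qhat_dot]
        exact Finset.sum_nonneg fun j _ => hQ.2 _ (fun ic => hx _)
      · exact Stmt5Aux.feas_step A B C D N₁ p hp P Q γ (hPsymm P hP) hQ.1 hLpd
    · rintro ⟨γ, hγ, P, Q, hP, _hQ, hLpd⟩
      obtain ⟨γ', hγ', P₁, hpsd, hpd⟩ := Stmt5Aux.feas_back A B C D N₁ p hp P Q γ hP hLpd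
      exact ⟨γ', hγ', P₁, 0, hpsd,
        ⟨by simp [Matrix.IsSymm], fun x _ => by simp⟩, hpd⟩
  · -- gammaBarBarPlus
    apply Stmt5Aux.sInf_le_sInf_special
    · exact fun γ hγ => le_of_lt hγ.1
    · rintro γ ⟨hγ, P, Q, Q₁, Q₂, hP, hQsum, hQ₁, hQ₂s, hQ₂n, hLpd⟩
      have hQ₁s : Q₁ᵀ = Q₁ := by
        have := hQ₁.1
        rwa [Matrix.IsHermitian, Matrix.conjTranspose_eq_transpose_of_trivial] at this
      have hQsymm : Q.IsSymm := by
        rw [Matrix.IsSymm, hQsum, Matrix.transpose_add, hQ₁s, hQ₂s]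
      refine ⟨hγ, P, Stmt5Aux.Qhat p N₁ Q, Stmt5Aux.Qhat p N₁ Q₁, Stmt5Aux.Qhat p N₁ Q₂,
        hP, by rw [hQsum, Stmt5Aux.Qhat_add],
        Stmt5Aux.Qhat_posSemidef p N₁ hQ₁,
        Stmt5Aux.Qhat_isSymm p N₁ hQ₂s,
        fun i j => Stmt5Aux.Qhat_nonneg p N₁ hQ₂n i j, ?_⟩
      exact Stmt5Aux.feas_step A B C D N₁ p hp P Q γ (hPsymm P hP) hQsymm hLpd
    · rintro ⟨γ, hγ, P, Q, Q₁, Q₂, hP, _, _, _, _, hLpd⟩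
      obtain ⟨γ', hγ', P₁, hpsd, hpd⟩ := Stmt5Aux.feas_back A B C D N₁ p hp P Q γ hP hLpd
      exact ⟨γ', hγ', P₁, 0, 0, 0, hpsd, by rw [add_zero],
        Matrix.PosSemidef.zero, by simp [Matrix.IsSymm], fun i j => le_refl 0, hpd⟩


end
end

section
/- Let G be the discrete-time LTI system with matrices (A, B, C, D) where A is Schur–Cohn stable, and for N ∈ ℕ let D̂_N be the N-th order lifted feedthrough matrix. Then for every N ∈ ℕ, ‖D̂_N‖_{2+} ≤ ‖G‖_{2+}. -/
open Matrix

noncomputable section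

namespace Aux

section SchurDecay
open Filter
attribute [local instance] Matrix.linftyOpNormedRing Matrix.linftyOpNormedAlgebra

lemma schur_decay {n : ℕ} (A : Matrix (Fin n) (Fin n) ℝ) (hA : SchurStable A) :
    ∃ c r : ℝ, 0 ≤ c ∧ 0 < r ∧ r < 1 ∧ ∀ k : ℕ, ∀ i j, |(A ^ k) i j| ≤ c * r ^ k := by
  set a : Matrix (Fin n) (Fin n) ℂ := A.map (algebraMap ℝ ℂ) with ha
  have htend := spectrum.pow_nnnorm_pow_one_div_tendsto_nhds_spectralRadius a
  obtain ⟨t, ht1, ht2⟩ := exists_between hA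
  have htne : t ≠ ⊤ := (ht2.trans_le le_top).ne
  set r : NNReal := max t.toNNReal (1/2) with hr
  have hrpos : (0:ℝ) < r := by positivity
  have hrlt : (r : ℝ) < 1 := by
    have h1 : t.toNNReal < 1 := by
      rw [← ENNReal.coe_lt_one_iff] at *
      rwa [ENNReal.coe_toNNReal htne]
    have : r < 1 := max_lt h1 (by rw [← NNReal.coe_lt_coe]; norm_num)
    exact_mod_cast this
  have hρr : spectralRadius ℂ a < (r : ENNReal) := by
    calc spectralRadius ℂ a < t := ht1
    _ = (t.toNNReal : ENNReal) := (ENNReal.coe_toNNReal htne).symm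
    _ ≤ (r : ENNReal) := by exact_mod_cast le_max_left _ _
  have hev : ∀ᶠ k : ℕ in atTop, (‖a ^ k‖₊ : ENNReal) ^ (1 / (k:ℝ)) < (r : ENNReal) :=
    htend.eventually_lt_const hρr
  rw [Filter.eventually_atTop] at hev
  obtain ⟨K, hK⟩ := hev
  have key : ∀ k, K ≤ k → 1 ≤ k → ‖a ^ k‖ ≤ (r:ℝ) ^ k := by
    intro k hk h1k
    have h := hK k hk
    have hkr : (0:ℝ) < (k:ℝ) := by exact_mod_cast h1k
    have hpow : ((‖a ^ k‖₊ : ENNReal) ^ (1 / (k:ℝ))) ^ (k:ℝ) ≤ ((r:ENNReal)) ^ (k:ℝ) :=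
      ENNReal.rpow_le_rpow h.le hkr.le
    rw [← ENNReal.rpow_mul, one_div, inv_mul_cancel₀ hkr.ne', ENNReal.rpow_one,
      ENNReal.rpow_natCast, ← ENNReal.coe_pow, ENNReal.coe_le_coe] at hpow
    calc ‖a ^ k‖ = ((‖a ^ k‖₊ : ℝ)) := rfl
    _ ≤ ((r ^ k : NNReal) : ℝ) := by exact_mod_cast hpow
    _ = (r:ℝ) ^ k := by push_cast; ring
  -- now entrywise bound for all k
  set c : ℝ := 1 + ∑ m ∈ Finset.range (K + 1), ‖a ^ m‖ / (r:ℝ) ^ m with hc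
  refine ⟨c, r, ?_, hrpos, hrlt, ?_⟩
  · rw [hc]
    have : (0:ℝ) ≤ ∑ m ∈ Finset.range (K + 1), ‖a ^ m‖ / (r:ℝ) ^ m :=
      Finset.sum_nonneg fun m _ => by positivity
    linarith
  · intro k i j
    have hnorm : ‖a ^ k‖ ≤ c * (r:ℝ) ^ k := by
      rcases le_or_gt k K with hkK | hkK
      · have h1 : ‖a ^ k‖ / (r:ℝ) ^ k ≤ ∑ m ∈ Finset.range (K + 1), ‖a ^ m‖ / (r:ℝ) ^ m :=
          Finset.single_le_sum (f := fun m => ‖a ^ m‖ / (r:ℝ) ^ m)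
            (fun m _ => by positivity) (Finset.mem_range.mpr (Nat.lt_succ_of_le hkK))
      
        have h2 : ‖a ^ k‖ / (r:ℝ) ^ k ≤ c := by rw [hc]; linarith
        have h3 : (0:ℝ) < (r:ℝ) ^ k := by positivity
        calc ‖a ^ k‖ = (‖a ^ k‖ / (r:ℝ) ^ k) * (r:ℝ) ^ k := by field_simp
        _ ≤ c * (r:ℝ) ^ k := by apply mul_le_mul_of_nonneg_right h2 h3.le
      · have h1k : 1 ≤ k := le_trans (Nat.one_le_iff_ne_zero.mpr (by omega)) le_rfl
        have := key k hkK.le h1k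
        have hc1 : (1:ℝ) ≤ c := by
          have : (0:ℝ) ≤ ∑ m ∈ Finset.range (K + 1), ‖a ^ m‖ / (r:ℝ) ^ m :=
            Finset.sum_nonneg fun m _ => by positivity
          rw [hc]; linarith
        nlinarith [pow_pos hrpos k, pow_nonneg hrpos.le k]
    have hentry : |(A ^ k) i j| ≤ ‖a ^ k‖ := by
      have hmap : a ^ k = (A ^ k).map (algebraMap ℝ ℂ) := by
        rw [ha]
        exact (RingHom.map_pow ((algebraMap ℝ ℂ).mapMatrix) A k).symm
      have hb : ‖(a ^ k) i j‖₊ ≤ ‖a ^ k‖₊ := by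
        rw [Matrix.linfty_opNNNorm_def]
        calc ‖(a ^ k) i j‖₊ ≤ ∑ j' : Fin n, ‖(a ^ k) i j'‖₊ :=
          Finset.single_le_sum (f := fun j' => ‖(a ^ k) i j'‖₊) (fun j' _ => zero_le) (Finset.mem_univ j)
        _ ≤ Finset.univ.sup fun i' => ∑ j' : Fin n, ‖(a ^ k) i' j'‖₊ :=
          Finset.le_sup (f := fun i' => ∑ j' : Fin n, ‖(a ^ k) i' j'‖₊) (Finset.mem_univ i)
      have hb' : ‖(a ^ k) i j‖ ≤ ‖a ^ k‖ := hb
      have he : (a ^ k) i j = ((A ^ k) i j : ℂ) := by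
        rw [hmap]; simp [Matrix.map_apply, Complex.coe_algebraMap]
      rwa [he, Complex.norm_real] at hb'
    exact le_trans hentry hnorm

end SchurDecay

section VecAux
variable {ι κ μ : Type*} [Fintype ι] [Fintype κ]


variable {ι κ μ : Type*} [Fintype ι] [Fintype κ] [Fintype μ]

lemma vecNorm_nonneg (v : ι → ℝ) : 0 ≤ vecNorm v := Real.sqrt_nonneg _

lemma vecNorm_sq (v : ι → ℝ) : vecNorm v ^ 2 = ∑ i, (v i) ^ 2 :=
  Real.sq_sqrt (Finset.sum_nonneg fun i _ => sq_nonneg _)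

lemma vecNorm_eq_norm (v : ι → ℝ) : vecNorm v = ‖(WithLp.equiv 2 (ι → ℝ)).symm v‖ := by
  rw [EuclideanSpace.norm_eq]
  unfold vecNorm
  congr 1
  refine Finset.sum_congr rfl fun i _ => ?_
  rw [Real.norm_eq_abs, sq_abs]
  rfl

lemma vecNorm_sum_le {κ' : Type*} {s : Finset κ'} (f : κ' → ι → ℝ) :
    vecNorm (∑ j ∈ s, f j) ≤ ∑ j ∈ s, vecNorm (f j) := by
  simp_rw [vecNorm_eq_norm]
  have : (WithLp.equiv 2 (ι → ℝ)).symm (∑ j ∈ s, f j)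
      = ∑ j ∈ s, (WithLp.equiv 2 (ι → ℝ)).symm (f j) := by
    exact map_sum (WithLp.linearEquiv 2 ℝ (ι → ℝ)).symm _ _
  rw [this]
  exact norm_sum_le _ _

/-- Frobenius-type bound for mulVec in the Euclidean norm. -/
lemma vecNorm_mulVec_le (M : Matrix ι κ ℝ) (v : κ → ℝ) :
    vecNorm (M.mulVec v) ≤ Real.sqrt (∑ i, ∑ j, (M i j) ^ 2) * vecNorm v := by
  have h : ∑ i, (M.mulVec v i) ^ 2 ≤ (∑ i, ∑ j, (M i j) ^ 2) * ∑ j, (v j) ^ 2 := by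
    rw [Finset.sum_mul]
    refine Finset.sum_le_sum fun i _ => ?_
    exact Finset.sum_mul_sq_le_sq_mul_sq Finset.univ (fun j => M i j) v
  calc vecNorm (M.mulVec v) = Real.sqrt (∑ i, (M.mulVec v i) ^ 2) := rfl
  _ ≤ Real.sqrt ((∑ i, ∑ j, (M i j) ^ 2) * ∑ j, (v j) ^ 2) := Real.sqrt_le_sqrt h
  _ = _ := by
      rw [Real.sqrt_mul (Finset.sum_nonneg fun i _ => Finset.sum_nonneg fun j _ => sq_nonneg (M i j)) (∑ j, (v j) ^ 2)]
      rfl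

lemma ltiState_eq {n w : Type*} [Fintype n] [Fintype w] [DecidableEq n]
    (A : Matrix n n ℝ) (B : Matrix n w ℝ) (ws : ℕ → w → ℝ) (k : ℕ) :
    ltiState A B ws k = ∑ j ∈ Finset.range k, (A ^ (k - 1 - j) * B).mulVec (ws j) := by
  induction k with
  | zero => simp [ltiState]
  | succ k ih =>
    have hdist : A *ᵥ (∑ j ∈ Finset.range k, (A ^ (k - 1 - j) * B) *ᵥ ws j)
        = ∑ j ∈ Finset.range k, (A * (A ^ (k - 1 - j) * B)) *ᵥ ws j := by
      rw [show ∀ v, A *ᵥ v = A.mulVecLin v from fun v => rfl, map_sum]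
      exact Finset.sum_congr rfl fun j _ => by rw [Matrix.mulVecLin_apply, Matrix.mulVec_mulVec]
    rw [ltiState, ih, hdist, Finset.sum_range_succ]
    congr 1
    · refine Finset.sum_congr rfl fun j hj => ?_
      rw [Finset.mem_range] at hj
      have he : A * (A ^ (k - 1 - j) * B) = A ^ (k + 1 - 1 - j) * B := by
        rw [← Matrix.mul_assoc, ← pow_succ']
        congr 2
        omega
      rw [he]
    · have h0 : k + 1 - 1 - k = 0 := by omega
      rw [h0, pow_zero, Matrix.one_mul]


end VecAux

set_option maxHeartbeats 1000000 in
/-- Main boundedness lemma: a stable system has finite l2 gain. -/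
lemma gain_bound {n nw nz : ℕ}
    (A : Matrix (Fin n) (Fin n) ℝ) (B : Matrix (Fin n) (Fin nw) ℝ)
    (C : Matrix (Fin nz) (Fin n) ℝ) (D : Matrix (Fin nz) (Fin nw) ℝ)
    (hA : SchurStable A) :
    ∃ M : ℝ, 0 ≤ M ∧ ∀ ws : ℕ → Fin nw → ℝ, Summable (fun k => ∑ i, ws k i ^ 2) →
      Summable (fun k => ∑ i, (ltiOutput A B C D ws k i) ^ 2) ∧
      ∑' k, ∑ i, (ltiOutput A B C D ws k i) ^ 2 ≤ M * ∑' k, ∑ i, ws k i ^ 2 := by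
  obtain ⟨c, r, hc, hr0, hr1, hdecay⟩ := schur_decay A hA
  -- constant bounding entries of B
  set bB : ℝ := ∑ t, ∑ j, |B t j| with hbB
  have hbB0 : 0 ≤ bB := Finset.sum_nonneg fun t _ => Finset.sum_nonneg fun j _ => abs_nonneg _
  -- Frobenius bound for A^m * B
  set K : ℝ := Real.sqrt ((n : ℝ) * nw) * (c * bB) with hK
  have hK0 : 0 ≤ K := mul_nonneg (Real.sqrt_nonneg _) (mul_nonneg hc hbB0)
  have hfrob : ∀ m : ℕ, Real.sqrt (∑ i, ∑ j, ((A ^ m * B) i j) ^ 2) ≤ K * r ^ m := by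
    intro m
    have hentry : ∀ i j, |(A ^ m * B) i j| ≤ c * bB * r ^ m := by
      intro i j
      rw [Matrix.mul_apply]
      calc |∑ t, (A ^ m) i t * B t j| ≤ ∑ t, |(A ^ m) i t * B t j| :=
        Finset.abs_sum_le_sum_abs _ _
      _ ≤ ∑ t, (c * r ^ m) * |B t j| := by
          refine Finset.sum_le_sum fun t _ => ?_
          rw [abs_mul]
          exact mul_le_mul_of_nonneg_right (hdecay m i t) (abs_nonneg _)
      _ = (c * r ^ m) * ∑ t, |B t j| := by rw [Finset.mul_sum]
      _ ≤ (c * r ^ m) * bB := by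
          refine mul_le_mul_of_nonneg_left ?_ (by positivity)
          rw [hbB]
          refine Finset.sum_le_sum fun t _ => ?_
          exact Finset.single_le_sum (f := fun j' => |B t j'|)
            (fun j' _ => abs_nonneg _) (Finset.mem_univ j)
      _ = c * bB * r ^ m := by ring
    have hsum : ∑ i, ∑ j, ((A ^ m * B) i j) ^ 2 ≤ (n : ℝ) * nw * (c * bB * r ^ m) ^ 2 := by
      calc ∑ i, ∑ j, ((A ^ m * B) i j) ^ 2 ≤ ∑ _i : Fin n, ∑ _j : Fin nw, (c * bB * r ^ m) ^ 2 := by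
            refine Finset.sum_le_sum fun i _ => Finset.sum_le_sum fun j _ => ?_
            rw [← sq_abs]
            exact pow_le_pow_left₀ (abs_nonneg _) (hentry i j) 2
      _ = (n : ℝ) * nw * (c * bB * r ^ m) ^ 2 := by
            simp [Finset.sum_const, Finset.card_univ]; ring
    calc Real.sqrt (∑ i, ∑ j, ((A ^ m * B) i j) ^ 2)
        ≤ Real.sqrt ((n : ℝ) * nw * (c * bB * r ^ m) ^ 2) := Real.sqrt_le_sqrt hsum
    _ = Real.sqrt ((n : ℝ) * nw) * (c * bB * r ^ m) := by
        rw [Real.sqrt_mul (by positivity), Real.sqrt_sq (by positivity)]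
    _ = K * r ^ m := by rw [hK]; ring
  -- geometric sum bound
  set T : ℝ := K * (1 - r)⁻¹ with hT
  have hinv0 : 0 ≤ (1 - r)⁻¹ := by
    have : 0 < 1 - r := by linarith
    positivity
  have hT0 : 0 ≤ T := mul_nonneg hK0 hinv0
  have hgs : ∀ m : ℕ, ∑ t ∈ Finset.range m, r ^ t ≤ (1 - r)⁻¹ := by
    intro m
    have hsummable := summable_geometric_of_lt_one hr0.le hr1
    calc ∑ t ∈ Finset.range m, r ^ t ≤ ∑' t : ℕ, r ^ t :=
      Summable.sum_le_tsum _ (fun t _ => by positivity) hsummable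
    _ = (1 - r)⁻¹ := tsum_geometric_of_lt_one hr0.le hr1
  have hgeo : ∀ k : ℕ, ∑ j ∈ Finset.range k, K * r ^ (k - 1 - j) ≤ T := by
    intro k
    rw [← Finset.mul_sum, Finset.sum_range_reflect (fun j => r ^ j) k]
    exact mul_le_mul_of_nonneg_left (hgs k) hK0
  refine ⟨2 * (∑ i, ∑ j, (C i j) ^ 2) * T ^ 2 + 2 * (∑ i, ∑ j, (D i j) ^ 2), by positivity, ?_⟩
  intro ws hs
  set sa : ℕ → ℝ := fun k => ∑ i, ws k i ^ 2 with hsa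
  have hsa0 : ∀ k, 0 ≤ sa k := fun k => Finset.sum_nonneg fun i _ => sq_nonneg _
  set S : ℝ := ∑' k, sa k with hS
  have hS0 : 0 ≤ S := tsum_nonneg hsa0
  set x : ℕ → Fin n → ℝ := fun k => ltiState A B ws k with hx
  -- state bound
  have hxb : ∀ k, vecNorm (x k) ≤ ∑ j ∈ Finset.range k, K * r ^ (k - 1 - j) * vecNorm (ws j) := by
    intro k
    have hxk : x k = ltiState A B ws k := rfl
    rw [hxk, ltiState_eq]
    calc vecNorm (∑ j ∈ Finset.range k, (A ^ (k - 1 - j) * B).mulVec (ws j))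
        ≤ ∑ j ∈ Finset.range k, vecNorm ((A ^ (k - 1 - j) * B).mulVec (ws j)) :=
        vecNorm_sum_le _
    _ ≤ ∑ j ∈ Finset.range k, K * r ^ (k - 1 - j) * vecNorm (ws j) := by
        refine Finset.sum_le_sum fun j _ => ?_
        calc vecNorm ((A ^ (k - 1 - j) * B).mulVec (ws j))
            ≤ Real.sqrt (∑ i, ∑ j', ((A ^ (k - 1 - j) * B) i j') ^ 2) * vecNorm (ws j) :=
            vecNorm_mulVec_le _ _
        _ ≤ K * r ^ (k - 1 - j) * vecNorm (ws j) :=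
            mul_le_mul_of_nonneg_right (hfrob _) (vecNorm_nonneg _)
  -- quadratic state bound via Cauchy-Schwarz
  have hq : ∀ k, ∑ i, (x k i) ^ 2 ≤ T * ∑ j ∈ Finset.range k, K * r ^ (k - 1 - j) * sa j := by
    intro k
    have h1 : ∑ i, (x k i) ^ 2 ≤ (∑ j ∈ Finset.range k, K * r ^ (k - 1 - j) * vecNorm (ws j)) ^ 2 := by
      rw [← vecNorm_sq]
      exact pow_le_pow_left₀ (vecNorm_nonneg _) (hxb k) 2
    have h2 : (∑ j ∈ Finset.range k, K * r ^ (k - 1 - j) * vecNorm (ws j)) ^ 2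
        ≤ (∑ j ∈ Finset.range k, K * r ^ (k - 1 - j)) *
          ∑ j ∈ Finset.range k, K * r ^ (k - 1 - j) * sa j := by
      have := Finset.sum_mul_sq_le_sq_mul_sq (Finset.range k)
        (fun j => Real.sqrt (K * r ^ (k - 1 - j)))
        (fun j => Real.sqrt (K * r ^ (k - 1 - j)) * vecNorm (ws j))
      have e1 : ∀ j, Real.sqrt (K * r ^ (k - 1 - j)) *
          (Real.sqrt (K * r ^ (k - 1 - j)) * vecNorm (ws j))
          = K * r ^ (k - 1 - j) * vecNorm (ws j) := by
        intro j
        rw [← mul_assoc, Real.mul_self_sqrt (by positivity)]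
      have e2 : ∀ j, Real.sqrt (K * r ^ (k - 1 - j)) ^ 2 = K * r ^ (k - 1 - j) := fun j =>
        Real.sq_sqrt (by positivity)
      have e3 : ∀ j, (Real.sqrt (K * r ^ (k - 1 - j)) * vecNorm (ws j)) ^ 2
          = K * r ^ (k - 1 - j) * sa j := by
        intro j
        rw [mul_pow, e2, vecNorm_sq]
      simp_rw [e1, e2, e3] at this
      exact this
    have h3 : (∑ j ∈ Finset.range k, K * r ^ (k - 1 - j)) *
          (∑ j ∈ Finset.range k, K * r ^ (k - 1 - j) * sa j)
        ≤ T * ∑ j ∈ Finset.range k, K * r ^ (k - 1 - j) * sa j := by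
      refine mul_le_mul_of_nonneg_right (hgeo k) ?_
      exact Finset.sum_nonneg fun j _ => mul_nonneg (by positivity) (hsa0 j)
    linarith
  -- partial sums of the double sum
  have hdouble : ∀ m : ℕ, ∑ k ∈ Finset.range m, ∑ j ∈ Finset.range k, K * r ^ (k - 1 - j) * sa j
      ≤ T * S := by
    intro m
    have hswap : ∑ k ∈ Finset.range m, ∑ j ∈ Finset.range k, K * r ^ (k - 1 - j) * sa j
        = ∑ j ∈ Finset.range m, ∑ k ∈ Finset.Ico (j + 1) m, K * r ^ (k - 1 - j) * sa j := by
      have := Finset.sum_Ico_Ico_comm' 0 m (fun j k => K * r ^ (k - 1 - j) * sa j)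
      simpa [Nat.Ico_zero_eq_range] using this.symm
    rw [hswap]
    have hinner : ∀ j, ∑ k ∈ Finset.Ico (j + 1) m, K * r ^ (k - 1 - j) * sa j ≤ T * sa j := by
      intro j
      have : ∑ k ∈ Finset.Ico (j + 1) m, K * r ^ (k - 1 - j)
          = ∑ t ∈ Finset.range (m - (j + 1)), K * r ^ t := by
        rw [Finset.sum_Ico_eq_sum_range]
        refine Finset.sum_congr rfl fun t _ => ?_
        have he : j + 1 + t - 1 - j = t := by omega
        rw [he]
      calc ∑ k ∈ Finset.Ico (j + 1) m, K * r ^ (k - 1 - j) * sa j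
          = (∑ k ∈ Finset.Ico (j + 1) m, K * r ^ (k - 1 - j)) * sa j := by
            rw [Finset.sum_mul]
      _ = (∑ t ∈ Finset.range (m - (j + 1)), K * r ^ t) * sa j := by rw [this]
      _ ≤ T * sa j := by
          refine mul_le_mul_of_nonneg_right ?_ (hsa0 j)
          rw [← Finset.mul_sum, hT]
          exact mul_le_mul_of_nonneg_left (hgs _) hK0
    calc ∑ j ∈ Finset.range m, ∑ k ∈ Finset.Ico (j + 1) m, K * r ^ (k - 1 - j) * sa j
        ≤ ∑ j ∈ Finset.range m, T * sa j := Finset.sum_le_sum fun j _ => hinner j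
    _ = T * ∑ j ∈ Finset.range m, sa j := by rw [Finset.mul_sum]
    _ ≤ T * S := mul_le_mul_of_nonneg_left
        (Summable.sum_le_tsum _ (fun j _ => hsa0 j) hs) hT0
  -- summability of the state energy
  have hxpart : ∀ m : ℕ, ∑ k ∈ Finset.range m, ∑ i, (x k i) ^ 2 ≤ T * (T * S) := by
    intro m
    calc ∑ k ∈ Finset.range m, ∑ i, (x k i) ^ 2
        ≤ ∑ k ∈ Finset.range m, T * ∑ j ∈ Finset.range k, K * r ^ (k - 1 - j) * sa j :=
        Finset.sum_le_sum fun k _ => hq k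
    _ = T * ∑ k ∈ Finset.range m, ∑ j ∈ Finset.range k, K * r ^ (k - 1 - j) * sa j := by
        rw [Finset.mul_sum]
    _ ≤ T * (T * S) := mul_le_mul_of_nonneg_left (hdouble m) hT0
  have hxnonneg : ∀ k, 0 ≤ ∑ i, (x k i) ^ 2 := fun k => Finset.sum_nonneg fun i _ => sq_nonneg _
  have hxsummable : Summable (fun k => ∑ i, (x k i) ^ 2) :=
    summable_of_sum_range_le hxnonneg hxpart
  have hxtsum : ∑' k, ∑ i, (x k i) ^ 2 ≤ T * (T * S) :=
    Summable.tsum_le_of_sum_range_le hxsummable hxpart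
  -- output bound
  set fC2 : ℝ := ∑ i, ∑ j, (C i j) ^ 2 with hfC2
  set fD2 : ℝ := ∑ i, ∑ j, (D i j) ^ 2 with hfD2
  have hfC20 : 0 ≤ fC2 := Finset.sum_nonneg fun i _ => Finset.sum_nonneg fun j _ => sq_nonneg _
  have hfD20 : 0 ≤ fD2 := Finset.sum_nonneg fun i _ => Finset.sum_nonneg fun j _ => sq_nonneg _
  have hz : ∀ k, ∑ i, (ltiOutput A B C D ws k i) ^ 2
      ≤ 2 * fC2 * (∑ i, (x k i) ^ 2) + 2 * fD2 * sa k := by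
    intro k
    have h1 : ∀ i, (ltiOutput A B C D ws k i) ^ 2
        ≤ 2 * (C.mulVec (x k) i) ^ 2 + 2 * (D.mulVec (ws k) i) ^ 2 := by
      intro i
      have : ltiOutput A B C D ws k i = C.mulVec (x k) i + D.mulVec (ws k) i := rfl
      rw [this]
      nlinarith [sq_nonneg (C.mulVec (x k) i - D.mulVec (ws k) i)]
    have hCx : ∑ i, (C.mulVec (x k) i) ^ 2 ≤ fC2 * ∑ i, (x k i) ^ 2 := by
      have := vecNorm_mulVec_le C (x k)
      have h2 := pow_le_pow_left₀ (vecNorm_nonneg _) this 2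
      rw [vecNorm_sq, mul_pow, vecNorm_sq, Real.sq_sqrt hfC20] at h2
      exact h2
    have hDw : ∑ i, (D.mulVec (ws k) i) ^ 2 ≤ fD2 * sa k := by
      have := vecNorm_mulVec_le D (ws k)
      have h2 := pow_le_pow_left₀ (vecNorm_nonneg _) this 2
      rw [vecNorm_sq, mul_pow, vecNorm_sq, Real.sq_sqrt hfD20] at h2
      exact h2
    calc ∑ i, (ltiOutput A B C D ws k i) ^ 2
        ≤ ∑ i, (2 * (C.mulVec (x k) i) ^ 2 + 2 * (D.mulVec (ws k) i) ^ 2) :=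
        Finset.sum_le_sum fun i _ => h1 i
    _ = 2 * (∑ i, (C.mulVec (x k) i) ^ 2) + 2 * (∑ i, (D.mulVec (ws k) i) ^ 2) := by
        rw [Finset.sum_add_distrib, Finset.mul_sum, Finset.mul_sum]
    _ ≤ 2 * fC2 * (∑ i, (x k i) ^ 2) + 2 * fD2 * sa k := by nlinarith
  have hznonneg : ∀ k, 0 ≤ ∑ i, (ltiOutput A B C D ws k i) ^ 2 :=
    fun k => Finset.sum_nonneg fun i _ => sq_nonneg _
  have hmaj : Summable (fun k => 2 * fC2 * (∑ i, (x k i) ^ 2) + 2 * fD2 * sa k) :=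
    ((hxsummable.mul_left (2 * fC2)).add (hs.mul_left (2 * fD2)))
  have hzsummable : Summable (fun k => ∑ i, (ltiOutput A B C D ws k i) ^ 2) :=
    Summable.of_nonneg_of_le hznonneg hz hmaj
  refine ⟨hzsummable, ?_⟩
  have h4 : ∑' k, ∑ i, (ltiOutput A B C D ws k i) ^ 2
      ≤ ∑' k, (2 * fC2 * (∑ i, (x k i) ^ 2) + 2 * fD2 * sa k) :=
    Summable.tsum_le_tsum hz hzsummable hmaj
  have h5 : ∑' k, (2 * fC2 * (∑ i, (x k i) ^ 2) + 2 * fD2 * sa k)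
      = 2 * fC2 * (∑' k, ∑ i, (x k i) ^ 2) + 2 * fD2 * S := by
    rw [Summable.tsum_add (hxsummable.mul_left _) (hs.mul_left _), tsum_mul_left, tsum_mul_left]
  have h6 : 2 * fC2 * (∑' k, ∑ i, (x k i) ^ 2) ≤ 2 * fC2 * (T * (T * S)) :=
    mul_le_mul_of_nonneg_left hxtsum (by positivity)
  calc ∑' k, ∑ i, (ltiOutput A B C D ws k i) ^ 2
      ≤ 2 * fC2 * (T * (T * S)) + 2 * fD2 * S := by rw [h5] at h4; linarith
  _ = (2 * fC2 * T ^ 2 + 2 * fD2) * S := by ring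


/-- trick: sums over Fin N of a function extended by dite. -/
lemma sum_fin_dite {N : ℕ} (g : Fin N → ℝ) :
    ∑ k ∈ Finset.range N, (if h : k < N then g ⟨k, h⟩ else 0) = ∑ j : Fin N, g j := by
  rw [← Fin.sum_univ_eq_sum_range (fun k => if h : k < N then g ⟨k, h⟩ else 0) N]
  refine Finset.sum_congr rfl fun j _ => ?_
  rw [dif_pos j.2]


end Aux

set_option maxHeartbeats 1000000 in
/-- the positive maximal singular value of the lifted feedthrough matrix
D̂_N is a lower bound of the positive l2 induced norm of G. -/
theorem stmt_7 (n nw nz : ℕ)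
    (A : Matrix (Fin n) (Fin n) ℝ) (B : Matrix (Fin n) (Fin nw) ℝ)
    (C : Matrix (Fin nz) (Fin n) ℝ) (D : Matrix (Fin nz) (Fin nw) ℝ)
    (hA : SchurStable A) :
    ∀ N : ℕ, matPosNorm (liftD A B C D N) ≤ posL2Gain A B C D := by
  intro N
  obtain ⟨M, hM0, hMb⟩ := Aux.gain_bound A B C D hA
  set gset : Set ℝ := {c : ℝ | ∃ ws : ℕ → Fin nw → ℝ, (∀ k i, 0 ≤ ws k i) ∧
    Summable (fun k => ∑ i, (ws k i) ^ 2) ∧ sigNorm ws = 1 ∧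
    c = sigNorm (ltiOutput A B C D ws)} with hgset
  -- gset is bounded above by √M
  have hbdd : ∀ c ∈ gset, c ≤ Real.sqrt M := by
    rintro c ⟨ws, _hpos, hsum, hnorm, rfl⟩
    obtain ⟨hzs, hzb⟩ := hMb ws hsum
    have h1 : ∑' k, ∑ i, (ws k i) ^ 2 = 1 := by
      have := congrArg (fun t => t ^ 2) hnorm
      simpa [sigNorm, Real.sq_sqrt (tsum_nonneg (fun k =>
        Finset.sum_nonneg fun i _ => sq_nonneg _))] using this
    rw [h1, mul_one] at hzb
    exact Real.sqrt_le_sqrt hzb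
  have hBdd : BddAbove gset := ⟨Real.sqrt M, hbdd⟩
  have hnn : 0 ≤ posL2Gain A B C D := by
    apply Real.sSup_nonneg
    rintro c ⟨ws, _, _, _, rfl⟩
    exact Real.sqrt_nonneg _
  apply Real.sSup_le _ hnn
  rintro c ⟨v, hv0, hv1, rfl⟩
  -- construct the input signal
  set ws : ℕ → Fin nw → ℝ := fun k i => if h : k < N then v (⟨k, h⟩, i) else 0 with hws
  have hwpos : ∀ k i, 0 ≤ ws k i := by
    intro k i
    rw [hws]
    dsimp only
    split
    · exact hv0 _
    · exact le_rfl
  have hval : ∀ (k : ℕ) (h : k < N) (i : Fin nw), ws k i = v (⟨k, h⟩, i) := by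
    intro k h i; rw [hws]; simp [dif_pos h]
  have hzero : ∀ k : ℕ, ¬ k < N → ∀ i, ws k i = 0 := by
    intro k h i; rw [hws]; simp [dif_neg h]
  have hsaeq : ∀ k : ℕ, ¬ k < N → (∑ i, ws k i ^ 2) = 0 := by
    intro k h
    refine Finset.sum_eq_zero fun i _ => ?_
    rw [hzero k h i]; ring
  have hsum : Summable (fun k => ∑ i, (ws k i) ^ 2) :=
    summable_of_ne_finset_zero (s := Finset.range N)
      (fun k hk => hsaeq k (by simpa using hk))
  have htsum : ∑' k, ∑ i, (ws k i) ^ 2 = 1 := by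
    rw [tsum_eq_sum (s := Finset.range N) (fun k hk => hsaeq k (by simpa using hk))]
    have h1 : ∑ k ∈ Finset.range N, ∑ i, ws k i ^ 2
        = ∑ k ∈ Finset.range N, (if h : k < N then ∑ i, v (⟨k, h⟩, i) ^ 2 else 0) := by
      refine Finset.sum_congr rfl fun k hk => ?_
      have hkN : k < N := Finset.mem_range.mp hk
      rw [dif_pos hkN]
      exact Finset.sum_congr rfl fun i _ => by rw [hval k hkN i]
    rw [h1, Aux.sum_fin_dite (fun j => ∑ i, v (j, i) ^ 2)]
    have h2 : ∑ j : Fin N, ∑ i, v (j, i) ^ 2 = ∑ p : Fin N × Fin nw, v p ^ 2 :=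
      (Fintype.sum_prod_type (f := fun p : Fin N × Fin nw => v p ^ 2)).symm
    rw [h2, ← Aux.vecNorm_sq v, hv1, one_pow]
  have hsig1 : sigNorm ws = 1 := by
    rw [sigNorm, htsum, Real.sqrt_one]
  -- output identity
  have hout : ∀ (k : ℕ) (hk : k < N) (i : Fin nz),
      ltiOutput A B C D ws k i = (liftD A B C D N).mulVec v (⟨k, hk⟩, i) := by
    intro k hk i
    have hCsum : (C.mulVec (ltiState A B ws k)) i
        = ∑ j ∈ Finset.range k, ((C * A ^ (k - 1 - j) * B).mulVec (ws j)) i := by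
      rw [Aux.ltiState_eq]
      have h1 : C.mulVec (∑ j ∈ Finset.range k, (A ^ (k - 1 - j) * B).mulVec (ws j))
          = ∑ j ∈ Finset.range k, (C * A ^ (k - 1 - j) * B).mulVec (ws j) := by
        rw [show ∀ u, C *ᵥ u = C.mulVecLin u from fun _ => rfl, map_sum]
        refine Finset.sum_congr rfl fun j _ => ?_
        rw [Matrix.mulVecLin_apply, Matrix.mulVec_mulVec, Matrix.mul_assoc]
      rw [h1, Finset.sum_apply]
    have hL : ltiOutput A B C D ws k i
        = (∑ j ∈ Finset.range k, ((C * A ^ (k - 1 - j) * B).mulVec (ws j)) i)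
          + (D.mulVec (ws k)) i := by
      rw [← hCsum]; rfl
    -- RHS expansion
    set F : ℕ → ℝ := fun j => if h : j < N then
        ∑ c2, (if k = j then D i c2
          else if j < k then (C * A ^ (k - j - 1) * B) i c2 else 0) * v (⟨j, h⟩, c2)
      else 0 with hF
    set G : Fin N → ℝ := fun c1 => ∑ c2, (if k = (c1 : ℕ) then D i c2
        else if (c1 : ℕ) < k then (C * A ^ (k - (c1 : ℕ) - 1) * B) i c2 else 0) * v (c1, c2)
      with hG
    have hR : (liftD A B C D N).mulVec v (⟨k, hk⟩, i) = ∑ j ∈ Finset.range N, F j := by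
      have h1 : (liftD A B C D N).mulVec v (⟨k, hk⟩, i) = ∑ c1 : Fin N, G c1 := by
        rw [hG]
        simp only [Matrix.mulVec, dotProduct, liftD, Matrix.of_apply,
          Fintype.sum_prod_type, Fin.val_mk]
      have h2 : ∑ j ∈ Finset.range N, F j = ∑ c1 : Fin N, G c1 := by
        rw [← Aux.sum_fin_dite (fun c1 => G c1)]
      rw [h1, h2]
    have hsplit : ∑ j ∈ Finset.range N, F j
        = (∑ j ∈ Finset.range k, F j + F k) + ∑ j ∈ Finset.Ico (k + 1) N, F j := by
      rw [Finset.range_eq_Ico,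
        ← Finset.sum_Ico_consecutive F (Nat.zero_le (k + 1)) (by omega : k + 1 ≤ N),
        ← Finset.range_eq_Ico, Finset.sum_range_succ]
    have hIco0 : ∑ j ∈ Finset.Ico (k + 1) N, F j = 0 := by
      refine Finset.sum_eq_zero fun j hj => ?_
      obtain ⟨hj1, hj2⟩ := Finset.mem_Ico.mp hj
      rw [hF]
      dsimp only
      rw [dif_pos hj2]
      refine Finset.sum_eq_zero fun c2 _ => ?_
      rw [if_neg (by omega), if_neg (by omega), zero_mul]
    have hFk : F k = (D.mulVec (ws k)) i := by
      rw [hF]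
      dsimp only
      rw [dif_pos hk]
      have hD : (D.mulVec (ws k)) i = ∑ c2, D i c2 * ws k c2 := rfl
      rw [hD]
      refine Finset.sum_congr rfl fun c2 _ => ?_
      rw [if_pos rfl, hval k hk c2]
    have hFj : ∀ j ∈ Finset.range k, F j = ((C * A ^ (k - 1 - j) * B).mulVec (ws j)) i := by
      intro j hj
      have hjk : j < k := Finset.mem_range.mp hj
      have hjN : j < N := by omega
      rw [hF]
      dsimp only
      rw [dif_pos hjN]
      have hM : ((C * A ^ (k - 1 - j) * B).mulVec (ws j)) i
          = ∑ c2, (C * A ^ (k - 1 - j) * B) i c2 * ws j c2 := rfl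
      rw [hM]
      refine Finset.sum_congr rfl fun c2 _ => ?_
      rw [if_neg (by omega), if_pos hjk, hval j hjN c2]
      have he : k - j - 1 = k - 1 - j := by omega
      rw [he]
    rw [hL, hR, hsplit, hIco0, add_zero, hFk, Finset.sum_congr rfl hFj]
  -- final chain
  obtain ⟨hzs, hzb⟩ := hMb ws hsum
  have hfin : ∑ k ∈ Finset.range N, ∑ i, (ltiOutput A B C D ws k i) ^ 2
      = vecNorm ((liftD A B C D N).mulVec v) ^ 2 := by
    rw [Aux.vecNorm_sq]
    have h1 : ∑ k ∈ Finset.range N, ∑ i, (ltiOutput A B C D ws k i) ^ 2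
        = ∑ k ∈ Finset.range N, (if h : k < N then
            ∑ i, ((liftD A B C D N).mulVec v (⟨k, h⟩, i)) ^ 2 else 0) := by
      refine Finset.sum_congr rfl fun k hk => ?_
      have hkN : k < N := Finset.mem_range.mp hk
      rw [dif_pos hkN]
      exact Finset.sum_congr rfl fun i _ => by rw [hout k hkN i]
    rw [h1, Aux.sum_fin_dite (fun c1 => ∑ i, ((liftD A B C D N).mulVec v (c1, i)) ^ 2)]
    exact (Fintype.sum_prod_type
      (f := fun p : Fin N × Fin nz => ((liftD A B C D N).mulVec v p) ^ 2)).symm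
  have hle : vecNorm ((liftD A B C D N).mulVec v) ≤ sigNorm (ltiOutput A B C D ws) := by
    have h1 : ∑ k ∈ Finset.range N, ∑ i, (ltiOutput A B C D ws k i) ^ 2
        ≤ ∑' k, ∑ i, (ltiOutput A B C D ws k i) ^ 2 :=
      Summable.sum_le_tsum _ (fun k _ => Finset.sum_nonneg fun i _ => sq_nonneg _) hzs
    rw [hfin] at h1
    calc vecNorm ((liftD A B C D N).mulVec v)
        = Real.sqrt (vecNorm ((liftD A B C D N).mulVec v) ^ 2) :=
        (Real.sqrt_sq (Aux.vecNorm_nonneg _)).symm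
    _ ≤ Real.sqrt (∑' k, ∑ i, (ltiOutput A B C D ws k i) ^ 2) := Real.sqrt_le_sqrt h1
    _ = sigNorm (ltiOutput A B C D ws) := rfl
  have hmem : sigNorm (ltiOutput A B C D ws) ∈ gset :=
    ⟨ws, hwpos, hsum, hsig1, rfl⟩
  exact le_trans hle (le_csSup hBdd hmem)

end
end
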